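/- arXiv:2308.03242 — 3 statements merged into one kernel-verified Lean document; each statement's English description precedes it below -/
import Mathlib

section
/- Let {x_k}, {y_k}, {z_k} be sequences generated by Nesterov's accelerated mirror descent: z_{k+1} = z_k − ((k+1)σs/2)∇f(x_k); y_{k+1} = argmin_{y ∈ C} { s⟨∇f(x_k), y⟩ + (1/2)‖y − x_k‖² }; x_{k+1} = ((k+1)/(k+3)) y_{k+1} + (2/(k+3)) ∇φ*(z_{k+1}), with x₀ = y₀ = ∇φ*(z₀). Define E(k) = k(k+1)σs[f(y_k) − f(x*)] + 4 D_{φ*}(z_k, z*). Then for every k ≥ 0 and every s > 0, E(k+1) − E(k) ≤ −((k+1)(k+2)(1 − Ls)σ/2) ‖y_{k+1} − x_k‖². -/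
open Set Filter Topology
open scoped RealInnerProductSpace

/-- The Fenchel conjugate of a function over a constraint set `C`. -/
noncomputable def fenchelConjOn {n : ℕ} (C : Set (EuclideanSpace ℝ (Fin n)))
    (φ : EuclideanSpace ℝ (Fin n) → ℝ) (z : EuclideanSpace ℝ (Fin n)) : ℝ :=
  ⨆ x : C, (⟪z, (x : EuclideanSpace ℝ (Fin n))⟫ - φ x)

variable {n : ℕ}
local notation "E" => EuclideanSpace ℝ (Fin n)

lemma lineDeriv' (F : E → ℝ) (G p e : E) (t : ℝ) (h : HasGradientAt F G (p + t • e)) :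
    HasDerivAt (fun τ : ℝ => F (p + τ • e)) ⟪G, e⟫ t := by
  have hline : HasDerivAt (fun τ : ℝ => p + τ • e) e t := by
    simpa using ((hasDerivAt_id t).smul_const e).const_add p
  have := h.hasFDerivAt.comp_hasDerivAt t hline
  simpa [InnerProductSpace.toDual_apply_apply, Function.comp_def] using this

set_option maxHeartbeats 2000000 in
lemma bregman_key (C : Set (EuclideanSpace ℝ (Fin n))) (hCclosed : IsClosed C)
    (hCne : C.Nonempty) (φ : E → ℝ) (σ : ℝ) (hσ : 0 < σ)
    (hφsc : StrongConvexOn C σ φ) (gφs : E → E)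
    (hgφs : ∀ u, HasGradientAt (fenchelConjOn C φ) (gφs u) u)
    (hgφsC : ∀ u, gφs u ∈ C) (z w : E) :
    σ / 2 * ‖gφs z - gφs w‖ ^ 2 ≤
      fenchelConjOn C φ z - fenchelConjOn C φ w - ⟪gφs w, z - w⟫ := by
  classical
  set F := fenchelConjOn C φ with hF
  -- strong concavity of x ↦ ⟪u,x⟫ - φ x
  have hconc : ∀ (u : E) {p q : E}, p ∈ C → q ∈ C → ∀ (a b : ℝ), 0 ≤ a → 0 ≤ b → a + b = 1 →
      a * (⟪u, p⟫ - φ p) + b * (⟪u, q⟫ - φ q) + a * b * (σ / 2) * ‖p - q‖ ^ 2 ≤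
        ⟪u, a • p + b • q⟫ - φ (a • p + b • q) := by
    intro u p q hp hq a b ha hb hab
    have h1 := hφsc.2 hp hq ha hb hab
    have h2 : ⟪u, a • p + b • q⟫ = a * ⟪u, p⟫ + b * ⟪u, q⟫ := by
      rw [inner_add_right, real_inner_smul_right, real_inner_smul_right]
    rw [h2]
    simp only [smul_eq_mul] at h1
    nlinarith [h1]
  have hCconv' : Convex ℝ C := hφsc.1
  by_cases hB : ∃ u₀ : E, BddAbove (Set.range fun x : C => ⟪u₀, (x : E)⟫ - φ x)
  · -- bounded everywhere
    obtain ⟨u₀, hu₀⟩ := hB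
    obtain ⟨x₀, hx₀⟩ := id hCne
    obtain ⟨M, hM⟩ := hu₀
    have hM' : ∀ x ∈ C, ⟪u₀, x⟫ - φ x ≤ M := fun x hx =>
      hM (Set.mem_range_self (⟨x, hx⟩ : C))
    have hBall : ∀ u : E, BddAbove (Set.range fun x : C => ⟪u, (x : E)⟫ - φ x) := by
      intro u
      refine ⟨2 * M - (⟪u₀, x₀⟫ - φ x₀) + ‖u - u₀‖ ^ 2 / σ + ‖u - u₀‖ * ‖x₀‖, ?_⟩
      rintro r ⟨⟨x, hx⟩, rfl⟩
      simp only
      -- quadratic decay of ψ_{u₀}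
      have hmid := hconc u₀ hx hx₀ (1/2) (1/2) (by norm_num) (by norm_num) (by norm_num)
      have hmem : (1/2 : ℝ) • x + (1/2 : ℝ) • x₀ ∈ C :=
        hCconv' hx hx₀ (by norm_num) (by norm_num) (by norm_num)
      have hdecay : ⟪u₀, x⟫ - φ x ≤ 2 * M - (⟪u₀, x₀⟫ - φ x₀) - σ / 4 * ‖x - x₀‖ ^ 2 := by
        have := hM' _ hmem
        nlinarith [hmid]
      have hlin : ⟪u - u₀, x⟫ ≤ ‖u - u₀‖ * (‖x - x₀‖ + ‖x₀‖) := by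
        calc ⟪u - u₀, x⟫ ≤ ‖u - u₀‖ * ‖x‖ := real_inner_le_norm _ _
          _ ≤ ‖u - u₀‖ * (‖x - x₀‖ + ‖x₀‖) := by
              apply mul_le_mul_of_nonneg_left _ (norm_nonneg _)
              calc ‖x‖ = ‖(x - x₀) + x₀‖ := by rw [sub_add_cancel]
                _ ≤ ‖x - x₀‖ + ‖x₀‖ := norm_add_le _ _
      have hsplit : ⟪u, x⟫ - φ x = (⟪u₀, x⟫ - φ x) + ⟪u - u₀, x⟫ := by
        rw [inner_sub_left]; ring
      have hq : ‖u - u₀‖ * ‖x - x₀‖ - σ / 4 * ‖x - x₀‖ ^ 2 ≤ ‖u - u₀‖ ^ 2 / σ := by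
        rw [le_div_iff₀ hσ]
        nlinarith [sq_nonneg (σ / 2 * ‖x - x₀‖ - ‖u - u₀‖)]
      nlinarith [hdecay, hlin, hsplit, hq]
    haveI : Nonempty ↑C := Set.nonempty_coe_sort.mpr hCne
    have Fle : ∀ (u : E) (x : E), x ∈ C → ⟪u, x⟫ - φ x ≤ F u := by
      intro u x hx
      exact le_ciSup (hBall u) (⟨x, hx⟩ : C)
    have Feps : ∀ (u : E) (ε : ℝ), 0 < ε → ∃ x, x ∈ C ∧ F u - ε < ⟪u, x⟫ - φ x := by
      intro u ε hε
      obtain ⟨⟨x, hx⟩, hlt⟩ := exists_lt_of_lt_ciSup (show F u - ε < F u from sub_lt_self _ hε)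
      exact ⟨x, hx, hlt⟩
    have main : ∀ u : E, (∃ v : ℕ → E, (∀ m, v m ∈ C) ∧
        (∀ m : ℕ, F u - 1/((m:ℝ)+1) < ⟪u, v m⟫ - φ (v m)) ∧
        Tendsto v atTop (𝓝 (gφs u))) ∧
        ∀ x ∈ C, (⟪u, x⟫ - φ x) + σ/2 * ‖gφs u - x‖^2 ≤ F u := by
      intro u
      choose v hvC hv using fun m : ℕ => Feps u (1/((m:ℝ)+1)) (by positivity)
      have pair : ∀ m l : ℕ, σ/8 * ‖v m - v l‖^2 ≤ 1/((m:ℝ)+1)/2 + 1/((l:ℝ)+1)/2 := by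
        intro m l
        have h1 := hv m
        have h2 := hv l
        have hc := hconc u (hvC m) (hvC l) (1/2) (1/2) (by norm_num) (by norm_num) (by norm_num)
        have hmem : (1/2 : ℝ) • v m + (1/2 : ℝ) • v l ∈ C :=
          hCconv' (hvC m) (hvC l) (by norm_num) (by norm_num) (by norm_num)
        have hle := Fle u _ hmem
        nlinarith [h1, h2, hc, hle]
      have hcauchy : CauchySeq v := by
        rw [Metric.cauchySeq_iff']
        intro ε hε
        obtain ⟨N, hN⟩ := exists_nat_gt (8/(σ * ε^2))
        refine ⟨N, fun m hm => ?_⟩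
        rw [dist_eq_norm]
        have hb := pair m N
        have hN1 : (0:ℝ) < (N:ℝ)+1 := by positivity
        have hm1 : (0:ℝ) < (m:ℝ)+1 := by positivity
        have h1 : 1/((m:ℝ)+1) ≤ 1/((N:ℝ)+1) :=
          one_div_le_one_div_of_le hN1 (by exact_mod_cast Nat.succ_le_succ hm)
        have hse : 0 < σ * ε^2 := by positivity
        have h3 : 8/(σ * ε^2) < (N:ℝ)+1 := by linarith [Nat.cast_nonneg (α := ℝ) N]
        have h4 : 1/((N:ℝ)+1) < σ * ε^2/8 := by
          rw [div_lt_div_iff₀ hN1 (by norm_num : (0:ℝ) < 8)]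
          rw [div_lt_iff₀ hse] at h3
          nlinarith [h3]
        have hd2 : ‖v m - v N‖^2 < ε^2 := by nlinarith [hb, h1, h4, hσ]
        exact lt_of_pow_lt_pow_left₀ 2 (le_of_lt hε) hd2
      obtain ⟨xb, hxb⟩ := cauchySeq_tendsto_of_complete hcauchy
      have hxbC : xb ∈ C := hCclosed.mem_of_tendsto hxb (Eventually.of_forall hvC)
      have hsub : ∀ e : E, F u + ⟪e, xb⟫ ≤ F (u + e) := by
        intro e
        have hmle : ∀ m : ℕ, F u - 1/((m:ℝ)+1) + ⟪e, v m⟫ ≤ F (u + e) := by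
          intro m
          have h1 := Fle (u + e) (v m) (hvC m)
          have h2 := hv m
          have h3 : ⟪u + e, v m⟫ = ⟪u, v m⟫ + ⟪e, v m⟫ := inner_add_left _ _ _
          linarith
        have htd : Tendsto (fun m : ℕ => F u - 1/((m:ℝ)+1) + ⟪e, v m⟫) atTop
            (𝓝 (F u - 0 + ⟪e, xb⟫)) :=
          (tendsto_const_nhds.sub tendsto_one_div_add_atTop_nhds_zero_nat).add
            (tendsto_const_nhds.inner hxb)
        have := le_of_tendsto htd (Eventually.of_forall hmle)
        simpa using this
      have hid : gφs u = xb := by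
        have hq : ∀ e : E, ⟪gφs u, e⟫ - ⟪e, xb⟫ = 0 := by
          intro e
          have h1 : HasDerivAt (fun t : ℝ => F (u + t • e)) ⟪gφs u, e⟫ 0 := by
            have h0 : u + (0:ℝ) • e = u := by simp
            exact lineDeriv' F (gφs u) u e 0 (by rw [h0]; exact hgφs u)
          have h2 : HasDerivAt (fun t : ℝ => F u + t * ⟪e, xb⟫) ⟪e, xb⟫ 0 := by
            simpa using ((hasDerivAt_id (0:ℝ)).mul_const ⟪e, xb⟫).const_add (F u)
          have hd := h1.sub h2
          have hmin : IsLocalMin (fun t : ℝ => F (u + t • e) - (F u + t * ⟪e, xb⟫)) 0 := by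
            apply Filter.Eventually.of_forall
            intro t
            have := hsub (t • e)
            have h3 : ⟪t • e, xb⟫ = t * ⟪e, xb⟫ := real_inner_smul_left _ _ _
            simp only [zero_smul, add_zero, zero_mul]
            linarith
          exact hmin.hasDerivAt_eq_zero hd
        have h5 := hq (gφs u - xb)
        have h7 : ⟪xb, gφs u - xb⟫ = ⟪gφs u - xb, xb⟫ := real_inner_comm _ _
        have h6 : ⟪gφs u - xb, gφs u - xb⟫ = 0 := by
          rw [inner_sub_left]
          linarith
        exact sub_eq_zero.1 (inner_self_eq_zero.1 h6)
      have hdag : ∀ p ∈ C, (⟪u, p⟫ - φ p) + σ/2 * ‖gφs u - p‖^2 ≤ F u := by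
        intro p hp
        have step1 : ∀ a : ℝ, 0 < a → a < 1 →
            (⟪u, p⟫ - φ p) + a * (σ/2) * ‖gφs u - p‖^2 ≤ F u := by
          intro a ha0 ha1
          have hforall : ∀ m : ℕ, a * (F u - 1/((m:ℝ)+1)) + (1-a) * (⟪u, p⟫ - φ p)
              + a * (1-a) * (σ/2) * ‖v m - p‖^2 ≤ F u := by
            intro m
            have hc := hconc u (hvC m) hp a (1-a) (le_of_lt ha0) (by linarith) (by ring)
            have hmem : a • v m + (1-a) • p ∈ C :=
              hCconv' (hvC m) hp (le_of_lt ha0) (by linarith) (by ring)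
            have hle := Fle u _ hmem
            have h2 := hv m
            nlinarith [hc, hle, h2, mul_le_mul_of_nonneg_left (le_of_lt h2) (le_of_lt ha0)]
          have hnt : Tendsto (fun m : ℕ => v m - p) atTop (𝓝 (xb - p)) :=
            hxb.sub tendsto_const_nhds
          have htd : Tendsto (fun m : ℕ => a * (F u - 1/((m:ℝ)+1)) + (1-a) * (⟪u, p⟫ - φ p)
              + a * (1-a) * (σ/2) * ‖v m - p‖^2) atTop
              (𝓝 (a * (F u - 0) + (1-a) * (⟪u, p⟫ - φ p) + a * (1-a) * (σ/2) * ‖xb - p‖^2)) := by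
            refine Tendsto.add (Tendsto.add ?_ tendsto_const_nhds) ?_
            · exact (tendsto_const_nhds.sub tendsto_one_div_add_atTop_nhds_zero_nat).const_mul a
            · exact ((hnt.norm.pow 2)).const_mul _
          have hfin := le_of_tendsto htd (Eventually.of_forall hforall)
          rw [← hid] at hfin
          nlinarith [hfin, sub_pos.2 ha1]
        have hl : ∀ l : ℕ, (⟪u, p⟫ - φ p) + (1 - 1/((l:ℝ)+2)) * (σ/2) * ‖gφs u - p‖^2 ≤ F u := by
          intro l
          refine step1 _ ?_ ?_
          · have : 1/((l:ℝ)+2) < 1 := by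
              rw [div_lt_one (by positivity)]
              linarith [Nat.cast_nonneg (α := ℝ) l]
            linarith
          · have : 0 < 1/((l:ℝ)+2) := by positivity
            linarith
        have htd2 : Tendsto (fun l : ℕ => (⟪u, p⟫ - φ p) +
            (1 - 1/((l:ℝ)+2)) * (σ/2) * ‖gφs u - p‖^2) atTop
            (𝓝 ((⟪u, p⟫ - φ p) + (1 - 0) * (σ/2) * ‖gφs u - p‖^2)) := by
          refine tendsto_const_nhds.add (Tendsto.mul_const _ (Tendsto.mul_const _
            (tendsto_const_nhds.sub ?_)))
          have h7 := (tendsto_one_div_add_atTop_nhds_zero_nat (𝕜 := ℝ)).comp (tendsto_add_atTop_nat 1)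
          have h8 : ((fun n : ℕ => 1/((n:ℝ)+1)) ∘ (fun l : ℕ => l + 1)) =
              fun l : ℕ => 1/((l:ℝ)+2) := by
            funext l
            simp only [Function.comp_apply]
            push_cast
            ring_nf
          rwa [h8] at h7
        have := le_of_tendsto htd2 (Eventually.of_forall hl)
        linarith
      exact ⟨⟨v, hvC, hv, by rw [hid]; exact hxb⟩, hdag⟩
    obtain ⟨⟨v, hvC, hv, hvt⟩, -⟩ := main w
    obtain ⟨-, hdagz⟩ := main z
    have hm : ∀ m : ℕ, F w - 1/((m:ℝ)+1) + ⟪z - w, v m⟫ + σ/2 * ‖gφs z - v m‖^2 ≤ F z := by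
      intro m
      have h1 := hdagz (v m) (hvC m)
      have h2 := hv m
      have h3 : ⟪z, v m⟫ = ⟪w, v m⟫ + ⟪z - w, v m⟫ := by
        rw [inner_sub_left]; ring
      linarith
    have htd : Tendsto (fun m : ℕ => F w - 1/((m:ℝ)+1) + ⟪z - w, v m⟫ + σ/2 * ‖gφs z - v m‖^2)
        atTop (𝓝 (F w - 0 + ⟪z - w, gφs w⟫ + σ/2 * ‖gφs z - gφs w‖^2)) := by
      refine Tendsto.add (Tendsto.add ?_ (tendsto_const_nhds.inner hvt)) ?_
      · exact tendsto_const_nhds.sub tendsto_one_div_add_atTop_nhds_zero_nat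
      · exact (((tendsto_const_nhds.sub hvt).norm.pow 2)).const_mul _
    have hfin := le_of_tendsto htd (Eventually.of_forall hm)
    have hcomm : ⟪gφs w, z - w⟫ = ⟪z - w, gφs w⟫ := real_inner_comm _ _
    linarith
  · -- unbounded everywhere: F ≡ 0 and gφs ≡ 0
    push_neg at hB
    have hF0 : F = fun _ => (0:ℝ) := by
      funext u
      exact Real.iSup_of_not_bddAbove (hB u)
    have hg0 : ∀ u, gφs u = 0 := by
      intro u
      have h1 : HasGradientAt F (gφs u) u := hgφs u
      rw [hF0] at h1
      exact h1.unique (hasGradientAt_const u 0)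
    simp [hg0, hF0]

lemma smooth_upper (f : E → ℝ) (f' : E → E) (L : ℝ)
    (hfd : ∀ x, HasGradientAt f (f' x) x)
    (hfL : ∀ x y, ‖f' x - f' y‖ ≤ L * ‖x - y‖) (a b : E) :
    f b ≤ f a + ⟪f' a, b - a⟫ + L / 2 * ‖b - a‖ ^ 2 := by
  set e := b - a with he
  have key : ∀ t : ℝ, HasDerivAt (fun τ : ℝ => f (a + τ • e) - τ * ⟪f' a, e⟫ - L * τ ^ 2 / 2 * ‖e‖ ^ 2)
      (⟪f' (a + t • e), e⟫ - ⟪f' a, e⟫ - L * t * ‖e‖ ^ 2) t := by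
    intro t
    have h1 : HasDerivAt (fun τ : ℝ => f (a + τ • e)) ⟪f' (a + t • e), e⟫ t :=
      lineDeriv' f (f' (a + t • e)) a e t (hfd _)
    have h2 : HasDerivAt (fun τ : ℝ => τ * ⟪f' a, e⟫) ⟪f' a, e⟫ t := by
      simpa using (hasDerivAt_id t).mul_const ⟪f' a, e⟫
    have h3 : HasDerivAt (fun τ : ℝ => L * τ ^ 2 / 2 * ‖e‖ ^ 2) (L * t * ‖e‖ ^ 2) t := by
      have : HasDerivAt (fun τ : ℝ => τ ^ 2) (2 * t) t := by
        simpa using (hasDerivAt_pow 2 t)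
      have := ((this.const_mul L).div_const 2).mul_const (‖e‖ ^ 2)
      rw [show L * (2 * t) / 2 * ‖e‖ ^ 2 = L * t * ‖e‖ ^ 2 by ring] at this
      exact this
    exact (h1.sub h2).sub h3
  have anti : AntitoneOn (fun τ : ℝ => f (a + τ • e) - τ * ⟪f' a, e⟫ - L * τ ^ 2 / 2 * ‖e‖ ^ 2)
      (Set.Icc (0:ℝ) 1) := by
    apply antitoneOn_of_deriv_nonpos (convex_Icc 0 1)
    · exact Continuous.continuousOn (by
        exact continuous_iff_continuousAt.2 fun t => (key t).continuousAt)
    · intro t _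
      exact (key t).differentiableAt.differentiableWithinAt
    · intro t ht
      rw [interior_Icc] at ht
      rw [(key t).deriv]
      have hb : ⟪f' (a + t • e) - f' a, e⟫ ≤ L * t * ‖e‖ ^ 2 := by
        calc ⟪f' (a + t • e) - f' a, e⟫ ≤ ‖f' (a + t • e) - f' a‖ * ‖e‖ :=
              real_inner_le_norm _ _
          _ ≤ (L * ‖(a + t • e) - a‖) * ‖e‖ :=
              mul_le_mul_of_nonneg_right (hfL _ _) (norm_nonneg _)
          _ = L * t * ‖e‖ ^ 2 := by
              rw [add_sub_cancel_left, norm_smul, Real.norm_eq_abs, abs_of_pos ht.1]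
              ring
      rw [inner_sub_left] at hb
      linarith
  have h01 := anti (Set.left_mem_Icc.2 zero_le_one) (Set.right_mem_Icc.2 zero_le_one) zero_le_one
  simp only [one_smul, zero_smul, add_zero, one_pow, zero_pow, mul_zero, zero_mul, mul_one,
    sub_zero] at h01
  have : a + e = b := by rw [he]; abel
  rw [this] at h01
  linarith

lemma convex_lower (f : E → ℝ) (f' : E → E)
    (hfconv : ConvexOn ℝ Set.univ f) (hfd : ∀ x, HasGradientAt f (f' x) x) (a b : E) :
    f a + ⟪f' a, b - a⟫ ≤ f b := by
  have hline : HasDerivAt (fun t : ℝ => f (a + t • (b - a))) ⟪f' a, b - a⟫ 0 := by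
    have := lineDeriv' f (f' (a + (0:ℝ) • (b - a))) a (b - a) 0 (by simpa using hfd _)
    simpa using this
  have hslope : Tendsto (slope (fun t : ℝ => f (a + t • (b - a))) 0) (𝓝[>] 0)
      (𝓝 ⟪f' a, b - a⟫) :=
    (hasDerivAt_iff_tendsto_slope.1 hline).mono_left
      (nhdsWithin_mono 0 (fun t ht => ne_of_gt ht))
  have hev : ∀ᶠ t in 𝓝[>] (0:ℝ), slope (fun t : ℝ => f (a + t • (b - a))) 0 t ≤ f b - f a := by
    filter_upwards [Ioo_mem_nhdsGT_of_mem (Set.mem_Ico.2 ⟨le_refl (0:ℝ), zero_lt_one⟩)]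
      with t ht
    have hconv := hfconv.2 (Set.mem_univ a) (Set.mem_univ b)
      (by linarith [ht.2] : (0:ℝ) ≤ 1 - t) (le_of_lt ht.1) (by ring)
    have heq : (1 - t) • a + t • b = a + t • (b - a) := by
      rw [sub_smul, smul_sub, one_smul]; abel
    rw [heq, smul_eq_mul, smul_eq_mul] at hconv
    simp only [slope_def_field, zero_smul, add_zero, sub_zero]
    rw [div_le_iff₀ ht.1]
    nlinarith [hconv]
  have := le_of_tendsto hslope hev
  linarith



set_option maxHeartbeats 2000000 in
/-- For Nesterov's accelerated mirror descent, the Lyapunov function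
`E(k) = k(k+1)σs[f(y_k) − f(x*)] + 4D_{φ*}(z_k, z*)` satisfies
`E(k+1) − E(k) ≤ −((k+1)(k+2)(1 − Ls)σ/2)‖y_{k+1} − x_k‖²` for every step size `s > 0`. -/
theorem nesterov_mirror_descent_lyapunov_difference
{n : ℕ} (C : Set (EuclideanSpace ℝ (Fin n)))
    (hCconv : Convex ℝ C) (hCclosed : IsClosed C) (hCne : C.Nonempty)
    (f φ : EuclideanSpace ℝ (Fin n) → ℝ)
    (f' gφs : EuclideanSpace ℝ (Fin n) → EuclideanSpace ℝ (Fin n))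
    (σ L s : ℝ) (hσ : 0 < σ)
    -- f is convex and differentiable with L-Lipschitz gradient
    (hfconv : ConvexOn ℝ Set.univ f)
    (hfd : ∀ x, HasGradientAt f (f' x) x)
    (hfL : ∀ x y, ‖f' x - f' y‖ ≤ L * ‖x - y‖)
    -- φ is σ-strongly convex on C
    (hφsc : StrongConvexOn C σ φ)
    -- φ* is differentiable with gradient gφs, taking values in C
    (hgφs : ∀ z, HasGradientAt (fenchelConjOn C φ) (gφs z) z)
    (hgφsC : ∀ z, gφs z ∈ C)
    -- Nesterov's accelerated mirror descent iteration
    (x y z : ℕ → EuclideanSpace ℝ (Fin n))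
    (hz : ∀ k : ℕ, z (k + 1) = z k - ((((k : ℝ) + 1) * σ * s) / 2) • f' (x k))
    (hy : ∀ k : ℕ, y (k + 1) ∈ C ∧ ∀ w ∈ C,
      s * ⟪f' (x k), y (k + 1)⟫ + (1 / 2) * ‖y (k + 1) - x k‖ ^ 2 ≤
        s * ⟪f' (x k), w⟫ + (1 / 2) * ‖w - x k‖ ^ 2)
    (hx : ∀ k : ℕ, x (k + 1) =
      ((((k : ℝ) + 1)) / ((k : ℝ) + 3)) • y (k + 1) + (2 / ((k : ℝ) + 3)) • gφs (z (k + 1)))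
    (hx0 : x 0 = gφs (z 0)) (hy0 : y 0 = x 0)
    -- x* is a minimizer of f over C and ∇φ*(z*) = x*
    (xs zs : EuclideanSpace ℝ (Fin n))
    (hxsC : xs ∈ C) (hxs : ∀ w ∈ C, f xs ≤ f w) (hzs : gφs zs = xs)
    (hs : 0 < s) :
    ∀ k : ℕ,
      ((((k : ℝ) + 1) * ((k : ℝ) + 2)) * σ * s * (f (y (k + 1)) - f xs) +
          4 * (fenchelConjOn C φ (z (k + 1)) - fenchelConjOn C φ zs -
            ⟪gφs zs, z (k + 1) - zs⟫)) -
        (((k : ℝ) * ((k : ℝ) + 1)) * σ * s * (f (y k) - f xs) +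
          4 * (fenchelConjOn C φ (z k) - fenchelConjOn C φ zs - ⟪gφs zs, z k - zs⟫))
        ≤ -((((k : ℝ) + 1) * ((k : ℝ) + 2) * (1 - L * s) * σ) / 2) * ‖y (k + 1) - x k‖ ^ 2 := by
  intro k
  have hyC : ∀ j : ℕ, y j ∈ C := by
    intro j
    cases j with
    | zero => rw [hy0, hx0]; exact hgφsC _
    | succ i => exact (hy i).1
  have hK0 : (0:ℝ) ≤ (k:ℝ) := Nat.cast_nonneg k
  have hK2 : (0:ℝ) < (k:ℝ) + 2 := by linarith
  have hK2' : ((k:ℝ) + 2) ≠ 0 := ne_of_gt hK2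
  rw [hzs]
  -- decomposition of x k
  have hxk : x k = (((k:ℝ))/((k:ℝ)+2)) • y k + (2/((k:ℝ)+2)) • gφs (z k) := by
    cases k with
    | zero => norm_num [hx0]
    | succ j =>
      have h := hx j
      have hc1 : ((j:ℝ) + 1) = (((j+1 : ℕ)):ℝ) := by push_cast; ring
      have hc2 : ((j:ℝ) + 3) = (((j+1 : ℕ)):ℝ) + 2 := by push_cast; ring
      rw [hc1, hc2] at h
      exact h
  -- the vector identity
  have hvec : (k:ℝ) • (x k - y k) + (2:ℝ) • (x k - gφs (z (k+1)))
      = (2:ℝ) • (gφs (z k) - gφs (z (k+1))) := by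
    rw [hxk]
    match_scalars <;> (field_simp; try ring)
  -- h1 : smoothness
  have h1 : f (y (k+1)) ≤ f (x k) + (⟪f' (x k), y (k+1)⟫ - ⟪f' (x k), x k⟫)
      + L/2 * ‖y (k+1) - x k‖^2 := by
    have h := smooth_upper f f' L hfd hfL (x k) (y (k+1))
    rw [inner_sub_right] at h
    linarith
  -- h2, h3 : convexity
  have h2 : f (x k) + (⟪f' (x k), y k⟫ - ⟪f' (x k), x k⟫) ≤ f (y k) := by
    have h := convex_lower f f' hfconv hfd (x k) (y k)
    rw [inner_sub_right] at h
    linarith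
  have h3 : f (x k) + (⟪f' (x k), xs⟫ - ⟪f' (x k), x k⟫) ≤ f xs := by
    have h := convex_lower f f' hfconv hfd (x k) xs
    rw [inner_sub_right] at h
    linarith
  -- h4 : Bregman
  have h4 : σ/2 * ‖gφs (z (k+1)) - gφs (z k)‖^2 ≤
      fenchelConjOn C φ (z k) - fenchelConjOn C φ (z (k+1))
        - (((k:ℝ)+1)*σ*s)/2 * ⟪f' (x k), gφs (z (k+1))⟫ := by
    have h := bregman_key C hCclosed hCne φ σ hσ hφsc gφs hgφs hgφsC (z k) (z (k+1))
    have ezz : z k - z (k+1) = ((((k:ℝ)+1)*σ*s)/2) • f' (x k) := by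
      rw [hz k, sub_sub_cancel]
    rw [ezz, real_inner_smul_right, real_inner_comm, norm_sub_rev] at h
    linarith
  -- h5 : scalar form of the vector identity
  have h5 : (k:ℝ) * (⟪f' (x k), x k⟫ - ⟪f' (x k), y k⟫)
      + 2 * (⟪f' (x k), x k⟫ - ⟪f' (x k), gφs (z (k+1))⟫)
      = 2 * (⟪f' (x k), gφs (z k)⟫ - ⟪f' (x k), gφs (z (k+1))⟫) := by
    have hc := congrArg (fun t => ⟪f' (x k), t⟫) hvec
    simp only [inner_add_right, inner_sub_right, real_inner_smul_right] at hc
    linarith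
  -- variational inequality for the prox step
  have hVI : ∀ w ∈ C, 0 ≤ s * ⟪f' (x k), w - y (k+1)⟫ + ⟪y (k+1) - x k, w - y (k+1)⟫ := by
    intro w hw
    have key : ∀ t : ℝ, 0 < t → t ≤ 1 →
        0 ≤ s * ⟪f' (x k), w - y (k+1)⟫ + ⟪y (k+1) - x k, w - y (k+1)⟫
          + t/2 * ‖w - y (k+1)‖^2 := by
      intro t ht0 ht1
      have hpt : y (k+1) + t • (w - y (k+1)) ∈ C := by
        have heq : y (k+1) + t • (w - y (k+1)) = (1-t) • y (k+1) + t • w := by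
          rw [smul_sub, sub_smul, one_smul]; abel
        rw [heq]
        exact hCconv (hyC (k+1)) hw (by linarith) (le_of_lt ht0) (by ring)
      have h := (hy k).2 _ hpt
      have e1 : ⟪f' (x k), y (k+1) + t • (w - y (k+1))⟫
          = ⟪f' (x k), y (k+1)⟫ + t * ⟪f' (x k), w - y (k+1)⟫ := by
        rw [inner_add_right, real_inner_smul_right]
      have e2 : ‖y (k+1) + t • (w - y (k+1)) - x k‖^2
          = ‖y (k+1) - x k‖^2 + 2 * (t * ⟪y (k+1) - x k, w - y (k+1)⟫)
            + t^2 * ‖w - y (k+1)‖^2 := by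
        have heq : y (k+1) + t • (w - y (k+1)) - x k
            = (y (k+1) - x k) + t • (w - y (k+1)) := by abel
        rw [heq, norm_add_sq_real, real_inner_smul_right, norm_smul,
          Real.norm_eq_abs, mul_pow, sq_abs]
      rw [e1, e2] at h
      have h' : 0 ≤ t * (s * ⟪f' (x k), w - y (k+1)⟫ + ⟪y (k+1) - x k, w - y (k+1)⟫
          + t/2 * ‖w - y (k+1)‖^2) := by nlinarith [h]
      exact nonneg_of_mul_nonneg_right h' ht0
    have htd : Tendsto (fun t : ℝ => s * ⟪f' (x k), w - y (k+1)⟫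
        + ⟪y (k+1) - x k, w - y (k+1)⟫ + t/2 * ‖w - y (k+1)‖^2) (𝓝[>] 0)
        (𝓝 (s * ⟪f' (x k), w - y (k+1)⟫ + ⟪y (k+1) - x k, w - y (k+1)⟫
          + 0/2 * ‖w - y (k+1)‖^2)) := by
      apply Tendsto.mono_left _ nhdsWithin_le_nhds
      exact Continuous.tendsto
        (continuous_const.add ((continuous_id.div_const 2).mul continuous_const)) 0
    have hev : ∀ᶠ t in 𝓝[>] (0:ℝ), 0 ≤ s * ⟪f' (x k), w - y (k+1)⟫
        + ⟪y (k+1) - x k, w - y (k+1)⟫ + t/2 * ‖w - y (k+1)‖^2 := by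
      filter_upwards [Ioc_mem_nhdsGT_of_mem (Set.mem_Ico.2 ⟨le_refl (0:ℝ), zero_lt_one⟩)]
        with t ht
      exact key t ht.1 ht.2
    have := ge_of_tendsto htd hev
    simpa using this
  -- apply VI at the combined point
  have hu : (((k:ℝ))/((k:ℝ)+2)) • y k + (2/((k:ℝ)+2)) • gφs (z (k+1)) ∈ C := by
    apply hCconv (hyC k) (hgφsC _) (by positivity) (by positivity)
    field_simp
  have h6₀ := hVI _ hu
  have huxk : (((k:ℝ))/((k:ℝ)+2)) • y k + (2/((k:ℝ)+2)) • gφs (z (k+1)) - y (k+1)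
      = (2/((k:ℝ)+2)) • (gφs (z (k+1)) - gφs (z k)) - (y (k+1) - x k) := by
    rw [hxk]
    match_scalars <;> (field_simp; try ring)
  rw [huxk] at h6₀
  have i1 : ⟪f' (x k), (2/((k:ℝ)+2)) • (gφs (z (k+1)) - gφs (z k)) - (y (k+1) - x k)⟫
      = 2/((k:ℝ)+2) * (⟪f' (x k), gφs (z (k+1))⟫ - ⟪f' (x k), gφs (z k)⟫)
        - (⟪f' (x k), y (k+1)⟫ - ⟪f' (x k), x k⟫) := by
    rw [inner_sub_right, real_inner_smul_right, inner_sub_right, inner_sub_right]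
  have i2 : ⟪y (k+1) - x k, (2/((k:ℝ)+2)) • (gφs (z (k+1)) - gφs (z k)) - (y (k+1) - x k)⟫
      = 2/((k:ℝ)+2) * (⟪y (k+1) - x k, gφs (z (k+1))⟫ - ⟪y (k+1) - x k, gφs (z k)⟫)
        - ‖y (k+1) - x k‖^2 := by
    rw [inner_sub_right, real_inner_smul_right, inner_sub_right, real_inner_self_eq_norm_sq]
  rw [i1, i2] at h6₀
  have h6 : 0 ≤ 2*s*(⟪f' (x k), gφs (z (k+1))⟫ - ⟪f' (x k), gφs (z k)⟫)
      - ((k:ℝ)+2)*s*(⟪f' (x k), y (k+1)⟫ - ⟪f' (x k), x k⟫)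
      + 2*(⟪y (k+1) - x k, gφs (z (k+1))⟫ - ⟪y (k+1) - x k, gφs (z k)⟫)
      - ((k:ℝ)+2)*‖y (k+1) - x k‖^2 := by
    have h := mul_le_mul_of_nonneg_left h6₀ (le_of_lt hK2)
    rw [mul_zero] at h
    calc (0:ℝ) ≤ ((k:ℝ)+2) * (s * (2/((k:ℝ)+2) * (⟪f' (x k), gφs (z (k+1))⟫
            - ⟪f' (x k), gφs (z k)⟫) - (⟪f' (x k), y (k+1)⟫ - ⟪f' (x k), x k⟫))
          + (2/((k:ℝ)+2) * (⟪y (k+1) - x k, gφs (z (k+1))⟫ - ⟪y (k+1) - x k, gφs (z k)⟫)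
            - ‖y (k+1) - x k‖^2)) := h
      _ = 2*s*(⟪f' (x k), gφs (z (k+1))⟫ - ⟪f' (x k), gφs (z k)⟫)
          - ((k:ℝ)+2)*s*(⟪f' (x k), y (k+1)⟫ - ⟪f' (x k), x k⟫)
          + 2*(⟪y (k+1) - x k, gφs (z (k+1))⟫ - ⟪y (k+1) - x k, gφs (z k)⟫)
          - ((k:ℝ)+2)*‖y (k+1) - x k‖^2 := by
        field_simp
        ring
  -- h7 : Cauchy-Schwarz + AM-GM
  have h7 : 2*((k:ℝ)+1)*(⟪y (k+1) - x k, gφs (z (k+1))⟫ - ⟪y (k+1) - x k, gφs (z k)⟫)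
      ≤ ((k:ℝ)+1)*((k:ℝ)+2)/2*‖y (k+1) - x k‖^2 + 2*‖gφs (z (k+1)) - gφs (z k)‖^2 := by
    have hcs : ⟪y (k+1) - x k, gφs (z (k+1)) - gφs (z k)⟫
        ≤ ‖y (k+1) - x k‖ * ‖gφs (z (k+1)) - gφs (z k)‖ := real_inner_le_norm _ _
    rw [inner_sub_right] at hcs
    nlinarith [hcs, sq_nonneg (((k:ℝ)+1)*‖y (k+1) - x k‖ - 2*‖gφs (z (k+1)) - gφs (z k)‖),
      sq_nonneg (‖y (k+1) - x k‖), norm_nonneg (y (k+1) - x k),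
      norm_nonneg (gφs (z (k+1)) - gφs (z k)), hK0]
  -- rewrite the goal's inner product
  have egoal : ⟪xs, z (k+1) - zs⟫ = ⟪xs, z k - zs⟫
      - (((k:ℝ)+1)*σ*s)/2 * ⟪f' (x k), xs⟫ := by
    have heq : z (k+1) - zs = (z k - zs) - ((((k:ℝ)+1)*σ*s)/2) • f' (x k) := by
      rw [hz k]; abel
    rw [heq, inner_sub_right, real_inner_smul_right, real_inner_comm xs (f' (x k))]
  -- final combination
  have c1 : (0:ℝ) ≤ ((k:ℝ)+1)*((k:ℝ)+2)*σ*s := by positivity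
  have c2 : (0:ℝ) ≤ (k:ℝ)*((k:ℝ)+1)*σ*s := by positivity
  have c3 : (0:ℝ) ≤ 2*((k:ℝ)+1)*σ*s := by positivity
  have c6 : (0:ℝ) ≤ ((k:ℝ)+1)*σ := by positivity
  have H1 := mul_le_mul_of_nonneg_left h1 c1
  have H2 := mul_le_mul_of_nonneg_left h2 c2
  have H3 := mul_le_mul_of_nonneg_left h3 c3
  have H5 : (((k:ℝ)+1)*σ*s) * ((k:ℝ) * (⟪f' (x k), x k⟫ - ⟪f' (x k), y k⟫)
      + 2 * (⟪f' (x k), x k⟫ - ⟪f' (x k), gφs (z (k+1))⟫))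
      = (((k:ℝ)+1)*σ*s) * (2 * (⟪f' (x k), gφs (z k)⟫ - ⟪f' (x k), gφs (z (k+1))⟫)) := by
    rw [h5]
  have H6 := mul_le_mul_of_nonneg_left h6 c6
  have H7 := mul_le_mul_of_nonneg_left h7 (le_of_lt hσ)
  rw [egoal]
  nlinarith [H1, H2, H3, h4, H5, H6, H7]
end

section
/- Let p ≥ 2 be an integer and let φ : ℝⁿ → ℝ be a convex function that is σ-strongly convex of order p, i.e. its Bregman divergence satisfies D_φ(x,y) ≥ (σ/p)‖x−y‖^p for all x, y (σ > 0). Then the Fenchel conjugate φ* is differentiable and for all z, z' in dom(φ*), φ*(z') ≤ φ*(z) + ⟨∇φ*(z), z'−z⟩ + ((p−1)/p)(1/σ)^{1/(p−1)} ‖z'−z‖_*^{p/(p−1)}. -/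
open Set Filter Topology

/-- The Fenchel conjugate of `φ`, as a function on the dual space. -/
noncomputable def fenchelDual {E : Type*} [NormedAddCommGroup E] [NormedSpace ℝ E]
    (φ : E → ℝ) (z : StrongDual ℝ E) : ℝ :=
  ⨆ x : E, (z x - φ x)

/-- Young-type bound used for conjugate smoothness. -/
lemma young_aux (p : ℕ) (hp : 2 ≤ p) {σ : ℝ} (hσ : 0 < σ) {a r : ℝ} (ha : 0 ≤ a) (hr : 0 ≤ r) :
    a * r - σ / p * r ^ p ≤
      (((p : ℝ) - 1) / p) * (1 / σ) ^ ((1 : ℝ) / ((p : ℝ) - 1)) *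
        a ^ ((p : ℝ) / ((p : ℝ) - 1)) := by
  set P : ℝ := (p : ℝ) with hP
  have hP2 : (2 : ℝ) ≤ P := by rw [hP]; exact_mod_cast hp
  have hP0 : (0 : ℝ) < P := by linarith
  have hP1 : (0 : ℝ) < P - 1 := by linarith
  have hpq : P.HolderConjugate (P / (P - 1)) := Real.HolderConjugate.conjExponent (by linarith)
  have key := Real.young_inequality_of_nonneg
    (mul_nonneg (Real.rpow_nonneg hσ.le (1 / P)) hr)
    (mul_nonneg (Real.rpow_nonneg hσ.le (-(1 / P))) ha) hpq
  have e1 : (σ ^ (1 / P) * r) * (σ ^ (-(1 / P)) * a) = a * r := by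
    rw [mul_mul_mul_comm, ← Real.rpow_add hσ]
    simp [mul_comm]
  have e2 : (σ ^ (1 / P) * r) ^ P = σ * r ^ p := by
    rw [Real.mul_rpow (Real.rpow_nonneg hσ.le _) hr, ← Real.rpow_mul hσ.le,
      one_div, inv_mul_cancel₀ hP0.ne', Real.rpow_one, Real.rpow_natCast]
  have e3 : (σ ^ (-(1 / P)) * a) ^ (P / (P - 1))
      = σ ^ (-(1 / (P - 1))) * a ^ (P / (P - 1)) := by
    rw [Real.mul_rpow (Real.rpow_nonneg hσ.le _) ha, ← Real.rpow_mul hσ.le]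
    congr 2
    field_simp
  rw [e1, e2, e3] at key
  have e4 : (1 / σ) ^ ((1 : ℝ) / (P - 1)) = σ ^ (-(1 / (P - 1))) := by
    rw [one_div σ, Real.inv_rpow hσ.le, ← Real.rpow_neg hσ.le]
  have h1 : σ * r ^ p / P = σ / P * r ^ p := by ring
  have h2 : σ ^ (-(1 / (P - 1))) * a ^ (P / (P - 1)) / (P / (P - 1))
      = (P - 1) / P * (σ ^ (-(1 / (P - 1))) * a ^ (P / (P - 1))) := by
    rw [div_div_eq_mul_div]
    field_simp
  rw [h1, h2] at key
  rw [e4]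
  linarith


lemma subgrad_strong {E : Type*} [NormedAddCommGroup E] [NormedSpace ℝ E]
    (p : ℕ) (σ : ℝ) (hσ : 0 < σ)
    (φ : E → ℝ) (φ' : E → StrongDual ℝ E)
    (hφsc : ∀ x y, (σ / p) * ‖x - y‖ ^ p ≤ φ x - φ y - φ' y (x - y))
    (x : E) (q : StrongDual ℝ E) (hq : ∀ w, φ x + q (w - x) ≤ φ w)
    (w : E) : φ x + q (w - x) + σ / p * ‖w - x‖ ^ p ≤ φ w := by
  set u := w - x with hu
  set d := ‖w - x‖ with hd
  have hσp : (0 : ℝ) ≤ σ / p := div_nonneg hσ.le (Nat.cast_nonneg p)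
  have hstep : ∀ t : ℝ, t ∈ Ioo (0:ℝ) 1 → φ x + q u + σ / p * ((1 - t) * d) ^ p ≤ φ w := by
    rintro t ⟨ht0, ht1⟩
    set y := x + t • u with hy
    have hwy : w - y = (1 - t) • u := by rw [hy, hu]; module
    have hxy : x - y = (-t) • u := by rw [hy]; module
    have hyx : y - x = t • u := by rw [hy]; module
    have h1 := hφsc w y
    have h2 := hφsc x y
    rw [hwy] at h1
    rw [hxy] at h2
    rw [norm_smul, Real.norm_eq_abs, abs_of_pos (by linarith), ← hd] at h1
    rw [norm_smul, Real.norm_eq_abs, abs_neg, abs_of_pos ht0, ← hd] at h2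
    rw [map_smul, smul_eq_mul] at h1
    rw [map_smul, smul_eq_mul] at h2
    have h3 := hq y
    rw [hyx, map_smul, smul_eq_mul] at h3
    have hA := mul_le_mul_of_nonneg_left h1 ht0.le
    have hB := mul_le_mul_of_nonneg_left h2 (by linarith : (0:ℝ) ≤ 1 - t)
    have hC : (0:ℝ) ≤ (1 - t) * (σ / p * (t * d) ^ p) := by
      have : (0:ℝ) ≤ t * d := mul_nonneg ht0.le (norm_nonneg _)
      exact mul_nonneg (by linarith) (mul_nonneg hσp (pow_nonneg this p))
    have hmul : t * (σ / p * ((1 - t) * d) ^ p) ≤ t * (φ w - φ x - q u) := by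
      nlinarith [hA, hB, h3, hC]
    have := le_of_mul_le_mul_left hmul ht0
    linarith
  have hcont : Continuous fun t : ℝ => φ x + q u + σ / p * ((1 - t) * d) ^ p := by
    continuity
  have hlim : Tendsto (fun t : ℝ => φ x + q u + σ / p * ((1 - t) * d) ^ p) (𝓝[>] 0)
      (𝓝 (φ x + q u + σ / p * ((1 - (0:ℝ)) * d) ^ p)) :=
    (hcont.tendsto 0).mono_left nhdsWithin_le_nhds
  have hev : ∀ᶠ t in 𝓝[>] (0:ℝ), φ x + q u + σ / p * ((1 - t) * d) ^ p ≤ φ w := by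
    filter_upwards [Ioo_mem_nhdsGT_of_mem (by norm_num : (0:ℝ) ∈ Ico (0:ℝ) 1)] with t ht
    exact hstep t ht
  have := le_of_tendsto hlim hev
  simpa using this


lemma exists_fenchel_max {E : Type*} [NormedAddCommGroup E] [NormedSpace ℝ E]
    [FiniteDimensional ℝ E]
    (p : ℕ) (hp : 2 ≤ p) (σ : ℝ) (hσ : 0 < σ)
    (φ : E → ℝ) (φ' : E → StrongDual ℝ E)
    (hφconv : ConvexOn ℝ Set.univ φ)
    (hφsc : ∀ x y, (σ / p) * ‖x - y‖ ^ p ≤ φ x - φ y - φ' y (x - y))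
    (z : StrongDual ℝ E) :
    ∃ x : E, ∀ w, z w - φ w ≤ z x - φ x := by
  have hcont : Continuous φ := by
    have h := hφconv.continuousOn isOpen_univ
    rwa [continuousOn_univ] at h
  set f : E → ℝ := fun w => z w - φ w with hf
  have hfc : Continuous f := z.continuous.sub hcont
  clear_value f
  have hσp : (0 : ℝ) < σ / p := div_pos hσ (by positivity)
  set C : ℝ := ‖z‖ + ‖φ' 0‖ with hC
  have hub : ∀ w : E, f w ≤ C * ‖w‖ - σ / p * ‖w‖ ^ p + |φ 0| := by
    intro w
    have h := hφsc w 0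
    simp only [sub_zero] at h
    have h1 : z w ≤ ‖z‖ * ‖w‖ := le_trans (le_abs_self _)
      (by simpa [Real.norm_eq_abs] using z.le_opNorm w)
    have h2 : -(φ' 0 w) ≤ ‖φ' 0‖ * ‖w‖ := le_trans (neg_le_abs _)
      (by simpa [Real.norm_eq_abs] using (φ' 0).le_opNorm w)
    have h3 : -(φ 0) ≤ |φ 0| := neg_le_abs _
    simp only [hf, hC]
    nlinarith [h, h1, h2, h3]
  set R : ℝ := max 1 (p / σ * (C + |φ 0| + |f 0| + 1)) with hR
  have hR1 : (1:ℝ) ≤ R := le_max_left _ _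
  have hR0 : (0:ℝ) ≤ R := by linarith
  have hout : ∀ w : E, R < ‖w‖ → f w < f 0 := by
    intro w hw
    have hw1 : (1:ℝ) ≤ ‖w‖ := le_trans hR1 hw.le
    have hp2 : ‖w‖ ^ 2 ≤ ‖w‖ ^ p := pow_le_pow_right₀ hw1 hp
    have hRbound : C + |φ 0| + |f 0| + 1 ≤ σ / p * ‖w‖ := by
      have h5 : p / σ * (C + |φ 0| + |f 0| + 1) < ‖w‖ :=
        lt_of_le_of_lt (le_max_right _ _) hw
      have h6 : σ / p * (p / σ * (C + |φ 0| + |f 0| + 1)) ≤ σ / p * ‖w‖ :=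
        mul_le_mul_of_nonneg_left h5.le hσp.le
      have hpne : (p:ℝ) ≠ 0 := by positivity
      have h7 : σ / p * (p / σ * (C + |φ 0| + |f 0| + 1)) = C + |φ 0| + |f 0| + 1 := by
        field_simp
      linarith
    have k1 : σ / p * ‖w‖ ^ 2 ≤ σ / p * ‖w‖ ^ p := mul_le_mul_of_nonneg_left hp2 hσp.le
    have k2 : (C + |φ 0| + |f 0| + 1) * ‖w‖ ≤ (σ / p * ‖w‖) * ‖w‖ :=
      mul_le_mul_of_nonneg_right hRbound (norm_nonneg w)
    have k3 : (σ / p * ‖w‖) * ‖w‖ = σ / p * ‖w‖ ^ 2 := by ring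
    have k4 : (|φ 0| + |f 0| + 1) * 1 ≤ (|φ 0| + |f 0| + 1) * ‖w‖ :=
      mul_le_mul_of_nonneg_left hw1 (by positivity)
    have k5 : -(|f 0|) ≤ f 0 := neg_abs_le _
    have s1 : f w ≤ C * ‖w‖ - σ / p * ‖w‖ ^ 2 + |φ 0| := by linarith [hub w, k1]
    have s2 : f w ≤ -(|φ 0| + |f 0| + 1) * ‖w‖ + |φ 0| := by linarith [s1, k2, k3]
    have s3 : f w ≤ -(|f 0|) - 1 := by linarith [s2, k4]
    linarith [s3, k5]
  obtain ⟨x₀, _, hx₀⟩ := (isCompact_closedBall (0:E) R).exists_isMaxOn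
    ⟨0, by simpa [Metric.mem_closedBall] using hR0⟩ hfc.continuousOn
  refine ⟨x₀, fun w => ?_⟩
  by_cases hw : ‖w‖ ≤ R
  · have := hx₀ (show w ∈ Metric.closedBall (0:E) R by
      simpa [Metric.mem_closedBall, dist_eq_norm] using hw)
    simpa [hf] using this
  · have h0 : f 0 ≤ f x₀ := hx₀ (by simpa [Metric.mem_closedBall] using hR0)
    have := le_trans (hout w (lt_of_not_ge hw)).le h0
    simpa [hf] using this

/-- Lemma 2: if `φ` is `σ`-strongly convex of order `p`, then its Fenchel conjugate `φ*` is
differentiable and satisfies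
`φ*(z') ≤ φ*(z) + ⟨∇φ*(z), z'−z⟩ + ((p−1)/p)(1/σ)^{1/(p−1)}‖z'−z‖_*^{p/(p−1)}`. -/
theorem conjugate_smoothness_of_higher_order_strong_convexity
    {E : Type*} [NormedAddCommGroup E] [NormedSpace ℝ E] [FiniteDimensional ℝ E]
    (p : ℕ) (hp : 2 ≤ p) (σ : ℝ) (hσ : 0 < σ)
    (φ : E → ℝ) (φ' : E → StrongDual ℝ E)
    -- φ is convex with subgradient selection φ'
    (hφconv : ConvexOn ℝ Set.univ φ)
    (hsub : ∀ x w, φ x + φ' x (w - x) ≤ φ w)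
    -- φ is σ-strongly convex of order p: D_φ(x, y) ≥ (σ/p)‖x − y‖^p
    (hφsc : ∀ x y, (σ / p) * ‖x - y‖ ^ p ≤ φ x - φ y - φ' y (x - y)) :
    ∃ g : StrongDual ℝ E → E,
      (∀ z, HasFDerivAt (fenchelDual φ) (NormedSpace.inclusionInDoubleDual ℝ E (g z)) z) ∧
      ∀ z z', fenchelDual φ z' ≤ fenchelDual φ z + (z' - z) (g z) +
        (((p : ℝ) - 1) / p) * (1 / σ) ^ ((1 : ℝ) / ((p : ℝ) - 1)) *
          ‖z' - z‖ ^ ((p : ℝ) / ((p : ℝ) - 1)) := by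
  have hP2 : (2 : ℝ) ≤ (p : ℝ) := by exact_mod_cast hp
  have hP0 : (0 : ℝ) < (p : ℝ) := by linarith
  have hP1 : (0 : ℝ) < (p : ℝ) - 1 := by linarith
  choose g hg using fun z => exists_fenchel_max p hp σ hσ φ φ' hφconv hφsc z
  have hbdd : ∀ z : StrongDual ℝ E, BddAbove (Set.range fun x : E => z x - φ x) :=
    fun z => ⟨z (g z) - φ (g z), by rintro _ ⟨w, rfl⟩; exact hg z w⟩
  have hval : ∀ z, fenchelDual φ z = z (g z) - φ (g z) := fun z =>
    le_antisymm (ciSup_le (hg z)) (le_ciSup (hbdd z) (g z))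
  have hsubg : ∀ z w, φ (g z) + z (w - g z) ≤ φ w := by
    intro z w
    have e : z (w - g z) = z w - z (g z) := map_sub z w (g z)
    linarith [hg z w]
  have hstr : ∀ z w, φ (g z) + z (w - g z) + σ / p * ‖w - g z‖ ^ p ≤ φ w :=
    fun z w => subgrad_strong p σ hσ φ φ' hφsc (g z) z (hsubg z) w
  have hupper : ∀ z z', fenchelDual φ z' ≤ fenchelDual φ z + (z' - z) (g z) +
      (((p : ℝ) - 1) / p) * (1 / σ) ^ ((1 : ℝ) / ((p : ℝ) - 1)) *
        ‖z' - z‖ ^ ((p : ℝ) / ((p : ℝ) - 1)) := by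
    intro z z'
    rw [hval z]
    have : fenchelDual φ z' = ⨆ x : E, (z' x - φ x) := rfl
    rw [this]
    refine ciSup_le fun w => ?_
    have h1 := hstr z w
    have h2 : (z' - z) w - (z' - z) (g z) ≤ ‖z' - z‖ * ‖w - g z‖ := by
      calc (z' - z) w - (z' - z) (g z) = (z' - z) (w - g z) := (map_sub _ _ _).symm
        _ ≤ |(z' - z) (w - g z)| := le_abs_self _
        _ ≤ ‖z' - z‖ * ‖w - g z‖ := by
            simpa [Real.norm_eq_abs] using (z' - z).le_opNorm (w - g z)
    have h3 := young_aux p hp hσ (norm_nonneg (z' - z)) (norm_nonneg (w - g z))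
    have e1 : (z' - z) w = z' w - z w := ContinuousLinearMap.sub_apply z' z w
    have e1' : (z' - z) (g z) = z' (g z) - z (g z) := ContinuousLinearMap.sub_apply z' z (g z)
    have e2 : z (w - g z) = z w - z (g z) := map_sub z w (g z)
    linarith [h1, h2, h3, e1, e1', e2]
  have hlower : ∀ z z', fenchelDual φ z + (z' - z) (g z) ≤ fenchelDual φ z' := by
    intro z z'
    have h : z' (g z) - φ (g z) ≤ fenchelDual φ z' := le_ciSup (hbdd z') (g z)
    have e : (z' - z) (g z) = z' (g z) - z (g z) := ContinuousLinearMap.sub_apply z' z (g z)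
    rw [hval z]
    linarith
  refine ⟨g, fun z => ?_, fun z z' => hupper z z'⟩
  rw [hasFDerivAt_iff_isLittleO_nhds_zero, Asymptotics.isLittleO_iff]
  intro c hc
  set Cst : ℝ := (((p : ℝ) - 1) / p) * (1 / σ) ^ ((1 : ℝ) / ((p : ℝ) - 1)) with hCst
  set qq : ℝ := (p : ℝ) / ((p : ℝ) - 1) with hqq
  have hq1 : qq - 1 = 1 / ((p : ℝ) - 1) := by rw [hqq]; field_simp; ring
  have hq1pos : 0 < qq - 1 := by rw [hq1]; positivity
  have hC0 : 0 ≤ Cst := by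
    rw [hCst]
    have : (0:ℝ) ≤ 1 / σ := by positivity
    exact mul_nonneg (div_nonneg (by linarith) hP0.le) (Real.rpow_nonneg this _)
  have t1 : Tendsto (fun h : StrongDual ℝ E => ‖h‖) (𝓝 0) (𝓝 0) := tendsto_norm_zero
  have t2 : ContinuousAt (fun s : ℝ => s ^ (qq - 1)) 0 :=
    Real.continuousAt_rpow_const 0 (qq - 1) (Or.inr hq1pos.le)
  have htend : Tendsto (fun h : StrongDual ℝ E => Cst * ‖h‖ ^ (qq - 1))
      (𝓝 0) (𝓝 0) := by
    have h := (t2.tendsto.comp t1).const_mul Cst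
    rw [Real.zero_rpow (ne_of_gt hq1pos), mul_zero] at h
    exact h
  have hev : ∀ᶠ h in 𝓝 (0 : StrongDual ℝ E), Cst * ‖h‖ ^ (qq - 1) < c :=
    htend.eventually (gt_mem_nhds hc)
  filter_upwards [hev] with h hh
  rw [NormedSpace.dual_def]
  have hu := hupper z (z + h)
  have hl := hlower z (z + h)
  rw [add_sub_cancel_left] at hu hl
  have hd1 : 0 ≤ fenchelDual φ (z + h) - fenchelDual φ z - h (g z) := by linarith
  have hd2 : fenchelDual φ (z + h) - fenchelDual φ z - h (g z) ≤ Cst * ‖h‖ ^ qq := by linarith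
  have hd3 : ‖h‖ ^ qq ≤ ‖h‖ ^ (qq - 1) * ‖h‖ := by
    rcases eq_or_lt_of_le (norm_nonneg h) with h0 | h0
    · rw [← h0, Real.zero_rpow (by positivity : qq ≠ 0), Real.zero_rpow (ne_of_gt hq1pos)]
      simp
    · have hr := Real.rpow_add_one (ne_of_gt h0) (qq - 1)
      have e : qq - 1 + 1 = qq := by ring
      rw [e] at hr
      rw [hr]
  rw [Real.norm_eq_abs, abs_of_nonneg hd1]
  calc fenchelDual φ (z + h) - fenchelDual φ z - h (g z)
      ≤ Cst * ‖h‖ ^ qq := hd2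
    _ ≤ Cst * (‖h‖ ^ (qq - 1) * ‖h‖) := mul_le_mul_of_nonneg_left hd3 hC0
    _ = (Cst * ‖h‖ ^ (qq - 1)) * ‖h‖ := by ring
    _ ≤ c * ‖h‖ := mul_le_mul_of_nonneg_right hh.le (norm_nonneg _)
end

section
/- Let p ≥ 2 be an integer, s > 0, C > 0, M > 0, and let {x_k}, {y_k}, {z_k} be sequences generated by the higher-order mirror descent x_{k+1} = (p/(k+p)) ∇φ*(z_k) + (k/(k+p)) y_k, z_{k+1} = z_k − C s p (k+1)^{(p−1)} ∇f(y_{k+1}), where each y_k satisfies ⟨∇f(y_k), x_k − y_k⟩ ≥ M s^{1/(p−1)} ‖∇f(y_k)‖_*^{p/(p−1)}, with x₀ = ∇φ*(z₀). If 0 < C < σ M^{p−1} / ((p−1)^{p−1} p), then min_{0 ≤ i ≤ k} ‖∇f(y_i)‖_*^{p/(p−1)} = o(1/k^{p+1}) as k → ∞; that is, k^{p+1} · min_{0 ≤ i ≤ k} ‖∇f(y_i)‖_*^{p/(p−1)} → 0. -/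
open Set Filter Topology

lemma aux_young_scalar {pr σ a r : ℝ} (hp : 1 < pr) (hσ : 0 < σ) (ha : 0 ≤ a) (hr : 0 ≤ r) :
    a * r ≤ σ / pr * r ^ pr + (pr - 1) / pr * σ ^ (-(1 : ℝ) / (pr - 1)) * a ^ (pr / (pr - 1)) := by
  have hp0 : 0 < pr := lt_trans one_pos hp
  have hp1 : 0 < pr - 1 := by linarith
  have hpq : pr.HolderConjugate (pr / (pr - 1)) := (Real.holderConjugate_iff_eq_conjExponent hp).2 rfl
  set t : ℝ := σ ^ ((1 : ℝ) / pr) with hts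
  have ht : 0 < t := Real.rpow_pos_of_pos hσ _
  have htp : t ^ pr = σ := by
    rw [hts, ← Real.rpow_mul hσ.le]
    rw [one_div_mul_cancel hp0.ne', Real.rpow_one]
  have key := Real.young_inequality_of_nonneg
      (mul_nonneg ht.le hr) (mul_nonneg ha (by positivity : (0:ℝ) ≤ t⁻¹)) hpq
  have e0 : t * r * (a * t⁻¹) = a * r := by field_simp
  have e1 : (t * r) ^ pr = σ * r ^ pr := by
    rw [Real.mul_rpow ht.le hr, htp]
  have e2 : (a * t⁻¹) ^ (pr / (pr - 1)) = σ ^ (-(1 : ℝ) / (pr - 1)) * a ^ (pr / (pr - 1)) := by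
    rw [Real.mul_rpow ha (by positivity)]
    rw [mul_comm]
    congr 1
    rw [← Real.rpow_neg_one t, hts, ← Real.rpow_mul hσ.le, ← Real.rpow_mul hσ.le]
    congr 1
    field_simp
  rw [e0, e1, e2] at key
  have e3 : σ * r ^ pr / pr = σ / pr * r ^ pr := by ring
  have e4 : σ ^ (-(1 : ℝ) / (pr - 1)) * a ^ (pr / (pr - 1)) / (pr / (pr - 1))
      = (pr - 1) / pr * σ ^ (-(1 : ℝ) / (pr - 1)) * a ^ (pr / (pr - 1)) := by
    rw [div_div_eq_mul_div]
    ring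
  rw [e3, e4] at key
  exact key

lemma aux_grad_ineq {V : Type*} [NormedAddCommGroup V] [NormedSpace ℝ V]
    {F : V → ℝ} (hF : ConvexOn ℝ Set.univ F) {u v : V} {G : V →L[ℝ] ℝ}
    (hG : HasFDerivAt F G v) : F v + G (u - v) ≤ F u := by
  set w : V := u - v with hw
  have hline : HasDerivAt (fun t : ℝ => F (v + t • w)) (G w) 0 := by
    have h1 : HasDerivAt (fun t : ℝ => v + t • w) w 0 := by
      simpa using ((hasDerivAt_id (0 : ℝ)).smul_const w).const_add v
    have hG' : HasFDerivAt F G (v + (0 : ℝ) • w) := by simpa using hG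
    exact hG'.comp_hasDerivAt 0 h1
  have hslope := hasDerivAt_iff_tendsto_slope.1 hline
  have hmono : (𝓝[>] (0 : ℝ)) ≤ (𝓝[≠] (0 : ℝ)) :=
    nhdsWithin_mono 0 (fun t ht => ne_of_gt ht)
  have hslope' : Tendsto (slope (fun t : ℝ => F (v + t • w)) 0) (𝓝[>] (0:ℝ)) (𝓝 (G w)) :=
    hslope.mono_left hmono
  have hev : ∀ᶠ t in 𝓝[>] (0 : ℝ), slope (fun t : ℝ => F (v + t • w)) 0 t ≤ F u - F v := by
    filter_upwards [Ioc_mem_nhdsGT_of_mem (by constructor <;> norm_num : (0:ℝ) ∈ Ico (0:ℝ) 1)]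
      with t ht
    obtain ⟨ht0, ht1⟩ := ht
    have hcvx := hF.2 (mem_univ u) (mem_univ v) ht0.le (by linarith : (0:ℝ) ≤ 1 - t) (by ring)
    have hpt : t • u + (1 - t) • v = v + t • w := by
      rw [hw]; module
    rw [hpt] at hcvx
    have h0 : v + (0:ℝ) • w = v := by simp
    rw [slope_def_field]
    simp only [h0, sub_zero, smul_eq_mul] at *
    rw [div_le_iff₀ ht0]
    nlinarith [hcvx]
  have := le_of_tendsto hslope' hev
  linarith

lemma aux_strong_subgrad {V : Type*} [NormedAddCommGroup V] [NormedSpace ℝ V]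
    (p : ℕ) (hp : 2 ≤ p) (σ : ℝ) (hσ : 0 < σ)
    (φ : V → ℝ) (φ' : V → V →L[ℝ] ℝ)
    (hφsc : ∀ x y, (σ / p) * ‖x - y‖ ^ p ≤ φ x - φ y - φ' y (x - y))
    (g : V →L[ℝ] ℝ) (yy : V) (hg : ∀ w, φ yy + g (w - yy) ≤ φ w) (x : V) :
    φ yy + g (x - yy) + (σ / p) * ‖x - yy‖ ^ p ≤ φ x := by
  have hsp : (0:ℝ) < σ / p := by positivity
  set N : ℝ := ‖x - yy‖ ^ p with hN
  have key : ∀ t : ℝ, t ∈ Ioo (0:ℝ) 1 →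
      (σ / p) * ((1 - t) ^ p + (1 - t) * t ^ (p - 1)) * N ≤ φ x - φ yy - g (x - yy) := by
    intro t ht
    obtain ⟨ht0, ht1⟩ := ht
    have h1t : (0:ℝ) < 1 - t := by linarith
    set b : V := yy + t • (x - yy) with hb
    have hxb : x - b = (1 - t) • (x - yy) := by rw [hb]; module
    have hyb : yy - b = (-t) • (x - yy) := by rw [hb]; module
    have hby : b - yy = t • (x - yy) := by rw [hb]; module
    have P1 : (σ / p) * ((1 - t) ^ p * N) ≤ φ x - φ b - (1 - t) * φ' b (x - yy) := by
      have := hφsc x b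
      rw [hxb] at this
      rw [norm_smul, Real.norm_eq_abs, abs_of_pos h1t, mul_pow] at this
      simpa [mul_assoc] using this
    have P2 : (σ / p) * (t ^ p * N) ≤ φ yy - φ b + t * φ' b (x - yy) := by
      have := hφsc yy b
      rw [hyb] at this
      rw [norm_smul, Real.norm_eq_abs, abs_of_neg (by linarith : -t < 0), neg_neg, mul_pow]
        at this
      have happ : (φ' b) ((-t) • (x - yy)) = -(t * (φ' b) (x - yy)) := by
        rw [map_smul, smul_eq_mul]; ring
      rw [happ] at this
      simpa [mul_assoc] using this
    have P3 : φ yy + t * g (x - yy) ≤ φ b := by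
      have := hg b
      rw [hby, map_smul, smul_eq_mul] at this
      exact this
    have hpow : t ^ (p - 1) * t = t ^ p := by
      rw [← pow_succ]; congr 1; omega
    have e : t * ((σ / p) * ((1 - t) ^ p + (1 - t) * t ^ (p - 1)) * N)
        = t * ((σ / p) * ((1 - t) ^ p * N)) + (1 - t) * ((σ / p) * (t ^ p * N)) := by
      rw [← hpow]; ring
    have s1 := mul_le_mul_of_nonneg_left P1 ht0.le
    have s2 := mul_le_mul_of_nonneg_left P2 h1t.le
    have final : t * ((σ / p) * ((1 - t) ^ p + (1 - t) * t ^ (p - 1)) * N)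
        ≤ t * (φ x - φ yy - g (x - yy)) := by nlinarith [s1, s2, P3, e]
    exact le_of_mul_le_mul_left final ht0
  have hcont : Tendsto (fun t : ℝ => (σ / p) * ((1 - t) ^ p + (1 - t) * t ^ (p - 1)) * N)
      (𝓝[>] (0:ℝ)) (𝓝 ((σ / p) * N)) := by
    have hc : Continuous (fun t : ℝ => (σ / p) * ((1 - t) ^ p + (1 - t) * t ^ (p - 1)) * N) := by
      continuity
    have := (hc.tendsto 0).mono_left (nhdsWithin_le_nhds (s := Ioi (0:ℝ)))
    have h0 : (σ / p) * ((1 - (0:ℝ)) ^ p + (1 - (0:ℝ)) * (0:ℝ) ^ (p - 1)) * N = (σ / p) * N := by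
      rw [zero_pow (by omega : p - 1 ≠ 0)]
      norm_num
    rwa [h0] at this
  have hev : ∀ᶠ t in 𝓝[>] (0:ℝ),
      (fun t : ℝ => (σ / p) * ((1 - t) ^ p + (1 - t) * t ^ (p - 1)) * N) t
        ≤ φ x - φ yy - g (x - yy) := by
    filter_upwards [Ioo_mem_nhdsGT_of_mem (by constructor <;> norm_num : (0:ℝ) ∈ Ico (0:ℝ) 1)]
      with t ht using key t ht
  have := le_of_tendsto hcont hev
  linarith


section Fenchel
variable {E : Type*} [NormedAddCommGroup E] [NormedSpace ℝ E]
variable (p : ℕ) (σ : ℝ) (φ : E → ℝ) (φ' : E → StrongDual ℝ E)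

lemma aux_fenchel_bdd (hp : 2 ≤ p) (hσ : 0 < σ)
    (hφsc : ∀ x y, (σ / p) * ‖x - y‖ ^ p ≤ φ x - φ y - φ' y (x - y))
    (z : StrongDual ℝ E) : BddAbove (Set.range fun x => z x - φ x) := by
  have hp0 : (0:ℝ) < p := by positivity
  have hb : (0:ℝ) < σ / p := by positivity
  set K : ℝ := ‖z‖ + ‖φ' 0‖ with hK
  have hK0 : (0:ℝ) ≤ K := by positivity
  refine ⟨-φ 0 + (2 * K + K ^ 2 / (σ / p)), ?_⟩
  rintro _ ⟨x, rfl⟩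
  show z x - φ x ≤ _
  have h1 := hφsc x 0
  simp only [sub_zero] at h1
  have h2 : z x ≤ K * ‖x‖ := by
    calc z x ≤ ‖z x‖ := le_abs_self _
      _ ≤ ‖z‖ * ‖x‖ := z.le_opNorm x
      _ ≤ K * ‖x‖ := by
          apply mul_le_mul_of_nonneg_right _ (norm_nonneg x)
          rw [hK]; linarith [norm_nonneg (φ' 0)]
  have h3 : -(φ' 0 x) ≤ K * ‖x‖ := by
    calc -(φ' 0 x) ≤ ‖φ' 0 x‖ := neg_le_abs _
      _ ≤ ‖φ' 0‖ * ‖x‖ := (φ' 0).le_opNorm x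
      _ ≤ K * ‖x‖ := by
          apply mul_le_mul_of_nonneg_right _ (norm_nonneg x)
          rw [hK]; linarith [norm_nonneg z]
  -- now a calc on r := ‖x‖
  set r : ℝ := ‖x‖ with hr
  have hr0 : 0 ≤ r := norm_nonneg x
  clear_value K r
  have hscal : 2 * (K * r) - (σ / p) * r ^ p ≤ 2 * K + K ^ 2 / (σ / p) := by
    rcases le_or_gt r 1 with h | h
    · have h5 : K * r ≤ K := mul_le_of_le_one_right hK0 h
      have hpos : 0 ≤ (σ / p) * r ^ p := by positivity
      have hpos2 : 0 ≤ K ^ 2 / (σ / p) := div_nonneg (sq_nonneg K) hb.le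
      linarith
    · have hr2 : r ^ 2 ≤ r ^ p := pow_le_pow_right₀ (by linarith) hp
      have h4 : 2 * (K * r) - (σ / p) * r ^ 2 ≤ K ^ 2 / (σ / p) := by
        rw [le_div_iff₀ hb]
        nlinarith [sq_nonneg ((σ / p) * r - K)]
      have h6 : (σ / p) * r ^ 2 ≤ (σ / p) * r ^ p := by nlinarith
      linarith
  linarith [h1, h2, h3, hscal]

lemma aux_fenchel_le (hp : 2 ≤ p) (hσ : 0 < σ)
    (hφsc : ∀ x y, (σ / p) * ‖x - y‖ ^ p ≤ φ x - φ y - φ' y (x - y))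
    (z : StrongDual ℝ E) (x : E) : z x - φ x ≤ fenchelDual φ z :=
  le_ciSup (aux_fenchel_bdd p σ φ φ' hp hσ hφsc z) x

lemma aux_fenchel_convex (hp : 2 ≤ p) (hσ : 0 < σ)
    (hφsc : ∀ x y, (σ / p) * ‖x - y‖ ^ p ≤ φ x - φ y - φ' y (x - y)) :
    ConvexOn ℝ Set.univ (fenchelDual φ) := by
  refine ⟨convex_univ, fun u _ v _ a b ha hb hab => ?_⟩
  refine ciSup_le fun x => ?_
  have h1 := aux_fenchel_le p σ φ φ' hp hσ hφsc u x
  have h2 := aux_fenchel_le p σ φ φ' hp hσ hφsc v x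
  have e : (a • u + b • v) x - φ x = a * (u x - φ x) + b * (v x - φ x) := by
    simp only [ContinuousLinearMap.add_apply, ContinuousLinearMap.coe_smul', Pi.smul_apply,
      smul_eq_mul]
    linear_combination (φ x) * hab
  rw [e]
  have := add_le_add (mul_le_mul_of_nonneg_left h1 ha) (mul_le_mul_of_nonneg_left h2 hb)
  simpa [smul_eq_mul] using this


lemma aux_fenchel_subgrad (hp : 2 ≤ p) (hσ : 0 < σ)
    (hsub : ∀ x w, φ x + φ' x (w - x) ≤ φ w)
    (hφsc : ∀ x y, (σ / p) * ‖x - y‖ ^ p ≤ φ x - φ y - φ' y (x - y))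
    (gφs : StrongDual ℝ E → E)
    (hgφs : ∀ z, HasFDerivAt (fenchelDual φ) (NormedSpace.inclusionInDoubleDual ℝ E (gφs z)) z)
    (u : StrongDual ℝ E) (w : E) :
    φ (gφs u) + u (w - gφs u) ≤ φ w := by
  set xu : E := gφs u with hxu
  have hgrad : ∀ v : StrongDual ℝ E,
      fenchelDual φ u + (v - u) xu ≤ fenchelDual φ v := by
    intro v
    have := aux_grad_ineq (aux_fenchel_convex p σ φ φ' hp hσ hφsc) (u := v) (v := u) (hgφs u)
    simpa [NormedSpace.dual_def] using this
  have h2 : fenchelDual φ (φ' xu) ≤ φ' xu xu - φ xu := by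
    refine ciSup_le fun w => ?_
    have := hsub xu w
    have happ : φ' xu (w - xu) = φ' xu w - φ' xu xu := map_sub _ _ _
    linarith
  have h1 := hgrad (φ' xu)
  have happ2 : (φ' xu - u) xu = φ' xu xu - u xu := by
    simp [ContinuousLinearMap.sub_apply]
  rw [happ2] at h1
  have h3 : φ xu ≤ u xu - fenchelDual φ u := by linarith
  have h4 : u w - φ w ≤ fenchelDual φ u := aux_fenchel_le p σ φ φ' hp hσ hφsc u w
  have happ3 : u (w - xu) = u w - u xu := map_sub _ _ _
  linarith

lemma aux_fenchel_smooth (hp : 2 ≤ p) (hσ : 0 < σ)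
    (hsub : ∀ x w, φ x + φ' x (w - x) ≤ φ w)
    (hφsc : ∀ x y, (σ / p) * ‖x - y‖ ^ p ≤ φ x - φ y - φ' y (x - y))
    (gφs : StrongDual ℝ E → E)
    (hgφs : ∀ z, HasFDerivAt (fenchelDual φ) (NormedSpace.inclusionInDoubleDual ℝ E (gφs z)) z)
    (u v : StrongDual ℝ E) :
    fenchelDual φ u ≤ fenchelDual φ v + (u - v) (gφs v)
      + ((p : ℝ) - 1) / p * σ ^ (-(1 : ℝ) / ((p : ℝ) - 1))
        * ‖u - v‖ ^ ((p : ℝ) / ((p : ℝ) - 1)) := by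
  have hp1 : (1:ℝ) < (p:ℝ) := by
    have : (2:ℝ) ≤ (p:ℝ) := by exact_mod_cast hp
    linarith
  set xv : E := gφs v with hxv
  have hsubv : ∀ x, φ xv + v (x - xv) + (σ / p) * ‖x - xv‖ ^ p ≤ φ x := fun x =>
    aux_strong_subgrad p hp σ hσ φ φ' hφsc v xv
      (aux_fenchel_subgrad p σ φ φ' hp hσ hsub hφsc gφs hgφs v) x
  refine ciSup_le fun x => ?_
  have h1 := hsubv x
  have h2 : v xv - φ xv ≤ fenchelDual φ v := aux_fenchel_le p σ φ φ' hp hσ hφsc v xv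
  have h3 : (u - v) (x - xv) ≤ ‖u - v‖ * ‖x - xv‖ :=
    le_trans (le_abs_self _) ((u - v).le_opNorm (x - xv))
  have h4 : ‖u - v‖ * ‖x - xv‖ ≤ σ / p * ‖x - xv‖ ^ (p:ℝ)
      + ((p : ℝ) - 1) / p * σ ^ (-(1 : ℝ) / ((p : ℝ) - 1)) * ‖u - v‖ ^ ((p : ℝ) / ((p : ℝ) - 1)) :=
    aux_young_scalar hp1 hσ (norm_nonneg _) (norm_nonneg _)
  rw [Real.rpow_natCast] at h4
  have e1 : (u - v) (x - xv) = u x - v x - (u - v) xv + (v xv - v xv) := by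
    simp [ContinuousLinearMap.sub_apply, map_sub]
  have e2 : v (x - xv) = v x - v xv := map_sub _ _ _
  simp only [ContinuousLinearMap.sub_apply] at *
  linarith

end Fenchel
set_option maxHeartbeats 2000000 in
/-- Higher-order mirror descent with `0 < C < σM^{p−1}/((p−1)^{p−1}p)` satisfies
`min_{0 ≤ i ≤ k} ‖∇f(y_i)‖_*^{p/(p−1)} = o(1/k^{p+1})` as `k → ∞`. -/
theorem higher_order_mirror_descent_gradient_rate
{E : Type*} [NormedAddCommGroup E] [NormedSpace ℝ E] [FiniteDimensional ℝ E]
    (p : ℕ) (hp : 2 ≤ p) (s C M σ : ℝ)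
    (hs : 0 < s) (hM : 0 < M) (hσ : 0 < σ)
    -- f is a continuously differentiable convex function
    (f : E → ℝ) (f' : E → StrongDual ℝ E)
    (hfconv : ConvexOn ℝ Set.univ f)
    (hfd : ∀ x, HasFDerivAt f (f' x) x) (hfc : Continuous f')
    -- φ is σ-strongly convex of order p, with subgradient selection φ'
    (φ : E → ℝ) (φ' : E → StrongDual ℝ E)
    (hφconv : ConvexOn ℝ Set.univ φ)
    (hsub : ∀ x w, φ x + φ' x (w - x) ≤ φ w)
    (hφsc : ∀ x y, (σ / p) * ‖x - y‖ ^ p ≤ φ x - φ y - φ' y (x - y))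
    -- φ* is differentiable with gradient gφs
    (gφs : StrongDual ℝ E → E)
    (hgφs : ∀ z, HasFDerivAt (fenchelDual φ) (NormedSpace.inclusionInDoubleDual ℝ E (gφs z)) z)
    -- the higher-order mirror descent iteration
    (x y : ℕ → E) (z : ℕ → StrongDual ℝ E)
    (hx : ∀ k : ℕ, x (k + 1) =
      ((p : ℝ) / ((k : ℝ) + (p : ℝ))) • gφs (z k) + ((k : ℝ) / ((k : ℝ) + (p : ℝ))) • y k)
    (hz : ∀ k : ℕ, z (k + 1) =
      z k - (C * s * (p : ℝ) * (Nat.ascFactorial (k + 1) (p - 1) : ℝ)) • f' (y (k + 1)))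
    (hy : ∀ k : ℕ, M * s ^ ((1 : ℝ) / ((p : ℝ) - 1)) * ‖f' (y k)‖ ^ ((p : ℝ) / ((p : ℝ) - 1)) ≤
      f' (y k) (x k - y k))
    (hx0 : x 0 = gφs (z 0))
    -- x* is a global minimizer of f and ∇φ*(z*) = x*
    (xs : E) (zs : StrongDual ℝ E)
    (hxs : ∀ w, f xs ≤ f w) (hzs : gφs zs = xs)
    (hC : 0 < C) (hCub : C < σ * M ^ (p - 1) / (((p : ℝ) - 1) ^ (p - 1) * (p : ℝ))) :
    Tendsto
      (fun k : ℕ => (k : ℝ) ^ (p + 1) *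
        sInf ((fun i => ‖f' (y i)‖ ^ ((p : ℝ) / ((p : ℝ) - 1))) '' {i : ℕ | i ≤ k}))
      atTop (𝓝 0) := by
  obtain ⟨pm, hpm⟩ : ∃ pm, p = pm + 1 := ⟨p - 1, by omega⟩
  have hpm1 : p - 1 = pm := by omega
  have hpR : (2:ℝ) ≤ (p:ℝ) := by exact_mod_cast hp
  have hp1R : (0:ℝ) < (p:ℝ) - 1 := by linarith
  have hp0R : (0:ℝ) < (p:ℝ) := by linarith
  have hpmR : (pm:ℝ) = (p:ℝ) - 1 := by
    have : ((pm:ℕ):ℝ) + 1 = (p:ℝ) := by exact_mod_cast congrArg (Nat.cast (R := ℝ)) hpm.symm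
    linarith
  simp only [hpm1] at hz hCub
  set q : ℝ := (p:ℝ) / ((p:ℝ) - 1) with hqdef
  set sr : ℝ := s ^ ((1:ℝ) / ((p:ℝ) - 1)) with hsrdef
  have hsrpos : 0 < sr := Real.rpow_pos_of_pos hs _
  have hq1r : q = 1 + (1:ℝ) / ((p:ℝ) - 1) := by rw [hqdef]; field_simp; ring
  -- weights
  set A : ℕ → ℝ := fun n => C * s * (Nat.ascFactorial n p : ℝ) with hA
  set aa : ℕ → ℝ := fun n => C * s * (p:ℝ) * (Nat.ascFactorial (n+1) pm : ℝ) with haa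
  have haaeq : ∀ n : ℕ, C * s * (p:ℝ) * (Nat.ascFactorial (n+1) pm : ℝ) = aa n := fun n => rfl
  simp only [haaeq] at hz
  have hasc1 : ∀ n : ℕ, (Nat.ascFactorial (n+1) p : ℝ)
      = ((n:ℝ) + (p:ℝ)) * (Nat.ascFactorial (n+1) pm : ℝ) := by
    intro n
    have : Nat.ascFactorial (n+1) p = (n + 1 + pm) * Nat.ascFactorial (n+1) pm := by
      rw [hpm]; exact Nat.ascFactorial_succ
    rw [this]
    push_cast [hpm]
    ring
  have hasc2 : ∀ n : ℕ, (Nat.ascFactorial n p : ℝ) = (n:ℝ) * (Nat.ascFactorial (n+1) pm : ℝ) := by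
    intro n
    have : Nat.ascFactorial n p = n * Nat.ascFactorial (n+1) pm := by
      rw [hpm, Nat.ascFactorial_succ, ← Nat.succ_ascFactorial]
    rw [this]
    push_cast
    ring
  have hA_nonneg : ∀ n, 0 ≤ A n := by
    intro n
    simp only [hA]
    positivity
  have haa_nonneg : ∀ n, 0 ≤ aa n := by
    intro n
    simp only [haa]
    positivity
  have hascpos : ∀ n : ℕ, (0:ℝ) < (Nat.ascFactorial (n+1) pm : ℝ) := by
    intro n
    have h1 : 0 < (n+1) ^ pm := pow_pos (Nat.succ_pos n) pm
    have h2 := Nat.pow_succ_le_ascFactorial (n+1) pm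
    exact_mod_cast lt_of_lt_of_le h1 h2
  have hascppos : ∀ n : ℕ, (0:ℝ) < (Nat.ascFactorial (n+1) p : ℝ) := by
    intro n
    have h1 : 0 < (n+1) ^ p := pow_pos (Nat.succ_pos n) p
    have h2 := Nat.pow_succ_le_ascFactorial (n+1) p
    exact_mod_cast lt_of_lt_of_le h1 h2
  have hA_pos : ∀ n : ℕ, 0 < A (n+1) := by
    intro n
    simp only [hA]
    have := hascppos n
    positivity
  have hA0 : A 0 = 0 := by
    have h0 : Nat.ascFactorial 0 p = 0 := by
      rw [hpm]; exact Nat.zero_ascFactorial pm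
    simp only [hA, h0]
    norm_num
  have hArec : ∀ n : ℕ, A (n+1) = A n + aa n := by
    intro n
    simp only [hA, haa, hasc1 n, hasc2 n]
    ring
  have hgnn : ∀ n : ℕ, (0:ℝ) ≤ ‖f' (y n)‖ ^ q := fun n => Real.rpow_nonneg (norm_nonneg _) q
  -- constants
  set Kσ : ℝ := ((p:ℝ) - 1) / p * σ ^ (-(1:ℝ) / ((p:ℝ) - 1)) with hKσ
  have hKσnn : 0 ≤ Kσ := by
    rw [hKσ]
    have := Real.rpow_nonneg hσ.le (-(1:ℝ) / ((p:ℝ) - 1))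
    positivity
  set κ : ℝ := Kσ * (C * s * (p:ℝ)) ^ q / (C * s) with hκ
  -- κ in closed form
  have hcsp : (0:ℝ) < C * s * (p:ℝ) := by positivity
  have hκ_eq : κ = ((p:ℝ) - 1) * (C * (p:ℝ) / σ) ^ ((1:ℝ)/((p:ℝ)-1)) * sr := by
    rw [hκ, hKσ, hq1r, Real.rpow_add hcsp, Real.rpow_one]
    have e1 : σ ^ (-(1:ℝ) / ((p:ℝ) - 1)) = (σ ^ ((1:ℝ) / ((p:ℝ) - 1)))⁻¹ := by
      rw [neg_div, Real.rpow_neg hσ.le]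
    have e2 : (C * s * (p:ℝ)) ^ ((1:ℝ)/((p:ℝ)-1))
        = (C * (p:ℝ) / σ) ^ ((1:ℝ)/((p:ℝ)-1)) * sr * σ ^ ((1:ℝ)/((p:ℝ)-1)) := by
      rw [hsrdef, ← Real.mul_rpow (by positivity) hs.le,
        ← Real.mul_rpow (by positivity) hσ.le]
      congr 1
      field_simp
    rw [e1, e2]
    have hσr : (0:ℝ) < σ ^ ((1:ℝ) / ((p:ℝ) - 1)) := Real.rpow_pos_of_pos hσ _
    field_simp
  have hkey : ((p:ℝ) - 1) * (C * (p:ℝ) / σ) ^ ((1:ℝ)/((p:ℝ)-1)) < M := by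
    have h0 : (0:ℝ) ≤ (C * (p:ℝ) / σ) ^ ((1:ℝ)/((p:ℝ)-1)) := Real.rpow_nonneg (by positivity) _
    refine lt_of_pow_lt_pow_left₀ pm hM.le ?_
    have e1 : (((p:ℝ) - 1) * (C * (p:ℝ) / σ) ^ ((1:ℝ)/((p:ℝ)-1))) ^ pm
        = ((p:ℝ) - 1) ^ pm * (C * (p:ℝ) / σ) := by
      rw [mul_pow, ← Real.rpow_natCast ((C * (p:ℝ) / σ) ^ ((1:ℝ)/((p:ℝ)-1))) pm,
        ← Real.rpow_mul (by positivity), hpmR]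
      rw [one_div, inv_mul_cancel₀ (ne_of_gt hp1R), Real.rpow_one]
    rw [e1]
    have hden : (0:ℝ) < ((p:ℝ)-1)^pm * (p:ℝ) := by positivity
    have hCub' : C * (((p:ℝ)-1)^pm * (p:ℝ)) < σ * M ^ pm := by
      have := (lt_div_iff₀ hden).1 hCub
      linarith
    have e2 : ((p:ℝ) - 1) ^ pm * (C * (p:ℝ) / σ) = C * (((p:ℝ)-1)^pm * (p:ℝ)) / σ := by
      field_simp
    rw [e2, div_lt_iff₀ hσ]
    nlinarith [hCub', hM, pow_pos hM pm]
  have hc : 0 < M * sr - κ := by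
    rw [hκ_eq]
    nlinarith [hkey, hsrpos]
  -- Lyapunov function
  set F : StrongDual ℝ E → ℝ := fenchelDual φ with hFd
  set V : ℕ → ℝ := fun n => A n * (f (y n) - f xs) + ((F (z n) - z n xs) - (F zs - zs xs))
    with hV
  have hgradF : ∀ (u v : StrongDual ℝ E), F v + (u - v) (gφs v) ≤ F u := by
    intro u v
    have := aux_grad_ineq (aux_fenchel_convex p σ φ φ' hp hσ hφsc) (u := u) (v := v) (hgφs v)
    rw [hFd]
    simpa [NormedSpace.dual_def] using this
  have hVnn : ∀ n, 0 ≤ V n := by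
    intro n
    have h1 : 0 ≤ A n * (f (y n) - f xs) :=
      mul_nonneg (hA_nonneg n) (by linarith [hxs (y n)])
    have h2 := hgradF (z n) zs
    rw [hzs] at h2
    have h3 : (z n - zs) xs = z n xs - zs xs := by
      simp [ContinuousLinearMap.sub_apply]
    rw [h3] at h2
    simp only [hV]
    linarith
  -- the per-step decrease
  have hstep : ∀ k : ℕ,
      V (k+1) + (M * sr - κ) * (A (k+1) * ‖f' (y (k+1))‖ ^ q) ≤ V k := by
    intro k
    have hkp : (0:ℝ) < (k:ℝ) + (p:ℝ) := by positivity
    set L : StrongDual ℝ E := f' (y (k+1)) with hL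
    have hf1 := aux_grad_ineq hfconv (u := y k) (v := y (k+1)) (hfd (y (k+1)))
    have hf2 := aux_grad_ineq hfconv (u := xs) (v := y (k+1)) (hfd (y (k+1)))
    rw [← hL] at hf1 hf2
    have hsm := aux_fenchel_smooth p σ φ φ' hp hσ hsub hφsc gφs hgφs (z (k+1)) (z k)
    rw [← hqdef, ← hKσ, ← hFd] at hsm
    have hzdiff : z (k+1) - z k = -(aa k) • L := by
      rw [hz k, ← hL]
      rw [sub_sub_cancel_left]; exact (neg_smul _ _).symm
    have hnorm : ‖z (k+1) - z k‖ ^ q = aa k ^ q * ‖L‖ ^ q := by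
      rw [hzdiff, norm_smul, Real.norm_eq_abs, abs_neg, abs_of_nonneg (haa_nonneg k),
        Real.mul_rpow (haa_nonneg k) (norm_nonneg _)]
    have happ1 : (z (k+1) - z k) (gφs (z k)) = -(aa k * L (gφs (z k))) := by
      rw [hzdiff]
      simp
    rw [hnorm, happ1] at hsm
    have hxse : z (k+1) xs = z k xs - aa k * L xs := by
      rw [hz k, ← hL]
      simp [ContinuousLinearMap.sub_apply]
    -- combination identity
    have hx' : L (x (k+1)) = ((p:ℝ) / ((k:ℝ) + (p:ℝ))) * L (gφs (z k))
        + ((k:ℝ) / ((k:ℝ) + (p:ℝ))) * L (y k) := by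
      rw [hx k]
      simp [map_add, map_smul]
    have e_a : A (k+1) * ((p:ℝ) / ((k:ℝ) + (p:ℝ))) = aa k := by
      simp only [hA, haa, hasc1 k]
      field_simp
    have e_A : A (k+1) * ((k:ℝ) / ((k:ℝ) + (p:ℝ))) = A k := by
      simp only [hA, haa, hasc1 k, hasc2 k]
      field_simp
    have hcomb : aa k * L (gφs (z k)) + A k * L (y k) = A (k+1) * L (x (k+1)) := by
      rw [hx']
      linear_combination (-(L (gφs (z k)))) * e_a + (-(L (y k))) * e_A
    -- the oracle inequality
    have hyk : M * sr * ‖L‖ ^ q ≤ L (x (k+1)) - L (y (k+1)) := by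
      have := hy (k+1)
      rw [← hL] at this
      rw [← map_sub]
      exact this
    have hyk' : A (k+1) * (M * sr * ‖L‖ ^ q) ≤ A (k+1) * (L (x (k+1)) - L (y (k+1))) :=
      mul_le_mul_of_nonneg_left hyk (hA_pos k).le
    -- bound on the smoothness term
    have hKa : Kσ * aa k ^ q ≤ κ * A (k+1) := by
      have hb1 : aa k ^ q = (C * s * (p:ℝ)) ^ q * (Nat.ascFactorial (k+1) pm : ℝ) ^ q := by
        rw [haa]
        exact Real.mul_rpow hcsp.le (Nat.cast_nonneg _)
      have hb2 : ((Nat.ascFactorial (k+1) pm : ℝ)) ^ q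
          = (Nat.ascFactorial (k+1) pm : ℝ)
            * (Nat.ascFactorial (k+1) pm : ℝ) ^ ((1:ℝ)/((p:ℝ)-1)) := by
        rw [hq1r, Real.rpow_add (hascpos k), Real.rpow_one]
      have hb3 : (Nat.ascFactorial (k+1) pm : ℝ) ^ ((1:ℝ)/((p:ℝ)-1)) ≤ (k:ℝ) + (p:ℝ) := by
        have h1 : Nat.ascFactorial (k+1) pm ≤ (k + p) ^ pm := by
          calc Nat.ascFactorial (k+1) pm ≤ (k + pm) ^ pm := Nat.ascFactorial_le_pow_add k pm
            _ ≤ (k + p) ^ pm := Nat.pow_le_pow_left (by omega) pm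
        have h2 : (Nat.ascFactorial (k+1) pm : ℝ) ≤ ((k:ℝ) + (p:ℝ)) ^ pm := by
          exact_mod_cast h1
        calc (Nat.ascFactorial (k+1) pm : ℝ) ^ ((1:ℝ)/((p:ℝ)-1))
            ≤ (((k:ℝ) + (p:ℝ)) ^ pm) ^ ((1:ℝ)/((p:ℝ)-1)) :=
              Real.rpow_le_rpow (Nat.cast_nonneg _) h2 (by positivity)
          _ = (k:ℝ) + (p:ℝ) := by
              rw [← Real.rpow_natCast ((k:ℝ) + (p:ℝ)) pm, ← Real.rpow_mul hkp.le, hpmR]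
              rw [mul_one_div, div_self (ne_of_gt hp1R), Real.rpow_one]
      have hκA : κ * A (k+1) = Kσ * (C * s * (p:ℝ)) ^ q
          * (((k:ℝ) + (p:ℝ)) * (Nat.ascFactorial (k+1) pm : ℝ)) := by
        rw [hκ, hA]
        simp only [hasc1 k]
        field_simp
      rw [hb1, hb2, hκA]
      have hmul : (0:ℝ) ≤ Kσ * (C * s * (p:ℝ)) ^ q :=
        mul_nonneg hKσnn (Real.rpow_nonneg hcsp.le q)
      calc Kσ * ((C * s * (p:ℝ)) ^ q * ((Nat.ascFactorial (k+1) pm : ℝ)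
              * (Nat.ascFactorial (k+1) pm : ℝ) ^ ((1:ℝ)/((p:ℝ)-1))))
          = Kσ * (C * s * (p:ℝ)) ^ q * (Nat.ascFactorial (k+1) pm : ℝ)
            * (Nat.ascFactorial (k+1) pm : ℝ) ^ ((1:ℝ)/((p:ℝ)-1)) := by ring
        _ ≤ Kσ * (C * s * (p:ℝ)) ^ q * (Nat.ascFactorial (k+1) pm : ℝ) * ((k:ℝ) + (p:ℝ)) := by
            apply mul_le_mul_of_nonneg_left hb3
            exact mul_nonneg hmul (Nat.cast_nonneg _)
        _ = Kσ * (C * s * (p:ℝ)) ^ q * (((k:ℝ) + (p:ℝ)) * (Nat.ascFactorial (k+1) pm : ℝ)) := by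
            ring
    have hKa' : Kσ * aa k ^ q * ‖L‖ ^ q ≤ κ * A (k+1) * ‖L‖ ^ q :=
      mul_le_mul_of_nonneg_right hKa (by rw [hL]; exact hgnn (k+1))
    have hf1' := mul_le_mul_of_nonneg_left hf1 (hA_nonneg k)
    have hf2' := mul_le_mul_of_nonneg_left hf2 (haa_nonneg k)
    simp only [map_sub] at hf1' hf2'
    have hArec1 : A (k+1) * (f (y (k+1)) - f xs)
        = A k * (f (y (k+1)) - f xs) + aa k * (f (y (k+1)) - f xs) := by
      rw [hArec k]; ring
    have hArec2 : A (k+1) * L (y (k+1)) = A k * L (y (k+1)) + aa k * L (y (k+1)) := by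
      rw [hArec k]; ring
    simp only [hV, hL] at *
    nlinarith [hf1', hf2', hsm, hxse, hcomb, hyk', hKa', hArec1, hArec2]
  -- telescoping
  have htel : ∀ n : ℕ,
      (M * sr - κ) * (∑ j ∈ Finset.range n, A (j+1) * ‖f' (y (j+1))‖ ^ q) + V n ≤ V 0 := by
    intro n
    induction n with
    | zero => simp
    | succ n ih =>
      rw [Finset.sum_range_succ]
      have h1 := hstep n
      nlinarith [h1, ih]
  set h : ℕ → ℝ := fun j => A j * ‖f' (y j)‖ ^ q with hh
  have hhnn : ∀ j, 0 ≤ h j := fun j => mul_nonneg (hA_nonneg j) (hgnn j)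
  have hh0 : h 0 = 0 := by
    simp only [hh, hA0]
    ring
  have hsumle : ∀ n, ∑ j ∈ Finset.range n, h j ≤ V 0 / (M * sr - κ) := by
    intro n
    cases n with
    | zero => simpa using div_nonneg (hVnn 0) hc.le
    | succ n =>
      rw [Finset.sum_range_succ', hh0, add_zero]
      rw [le_div_iff₀ hc]
      have h1 := htel n
      have h2 := hVnn n
      have he : ∑ j ∈ Finset.range n, h (j + 1)
          = ∑ j ∈ Finset.range n, A (j+1) * ‖f' (y (j+1))‖ ^ q := by
        apply Finset.sum_congr rfl
        intro i _
        simp only [hh]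
      rw [he]
      nlinarith [h1, h2]
  have hsummable : Summable h := summable_of_sum_range_le hhnn hsumle
  have htail : Tendsto (fun i : ℕ => ∑' j : ℕ, h (j + i)) atTop (𝓝 0) := tendsto_sum_nat_add h
  have hcomp : Tendsto (fun k : ℕ => k / 2 + 1) atTop atTop := by
    apply Filter.tendsto_atTop_atTop.2
    intro b
    exact ⟨2 * b, fun a ha => by omega⟩
  have hB : Tendsto (fun k : ℕ => (2:ℝ)^(p+1) / (C*s) * ∑' j : ℕ, h (j + (k/2 + 1)))
      atTop (𝓝 0) := by
    have := (htail.comp hcomp).const_mul ((2:ℝ)^(p+1) / (C*s))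
    simpa [Function.comp] using this
  refine squeeze_zero' ?_ ?_ hB
  · filter_upwards with k
    have hbdd : BddBelow ((fun i => ‖f' (y i)‖ ^ q) '' {i : ℕ | i ≤ k}) := by
      refine ⟨0, ?_⟩
      rintro b ⟨i, _, rfl⟩
      exact hgnn i
    have hm0 : 0 ≤ sInf ((fun i => ‖f' (y i)‖ ^ q) '' {i : ℕ | i ≤ k}) := by
      apply le_csInf ⟨_, Set.mem_image_of_mem _ (show (0:ℕ) ∈ {i : ℕ | i ≤ k} by simp)⟩
      rintro b ⟨i, _, rfl⟩
      exact hgnn i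
    positivity
  · filter_upwards with k
    show (k:ℝ) ^ (p+1) * sInf ((fun i => ‖f' (y i)‖ ^ q) '' {i : ℕ | i ≤ k}) ≤ _
    set m := sInf ((fun i => ‖f' (y i)‖ ^ q) '' {i : ℕ | i ≤ k}) with hm
    have hbdd : BddBelow ((fun i => ‖f' (y i)‖ ^ q) '' {i : ℕ | i ≤ k}) := by
      refine ⟨0, ?_⟩
      rintro b ⟨i, _, rfl⟩
      exact hgnn i
    have hm0 : 0 ≤ m := by
      rw [hm]
      apply le_csInf ⟨_, Set.mem_image_of_mem _ (show (0:ℕ) ∈ {i : ℕ | i ≤ k} by simp)⟩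
      rintro b ⟨i, _, rfl⟩
      exact hgnn i
    have hmle : ∀ j, j ≤ k → m ≤ ‖f' (y j)‖ ^ q := by
      intro j hj
      rw [hm]
      exact csInf_le hbdd ⟨j, hj, rfl⟩
    set n : ℕ := k / 2 with hn
    have hsum1 : ∀ i ∈ Finset.range (k - n), C * s * ((k:ℝ)/2)^p * m ≤ h (i + (n + 1)) := by
      intro i hi
      rw [Finset.mem_range] at hi
      have hik : i + (n+1) ≤ k := by omega
      have h1 : ((k:ℝ)/2) ≤ ((i + (n+1) : ℕ):ℝ) := by
        have h1' : k ≤ 2 * (i + (n+1)) := by omega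
        have := (Nat.cast_le (α := ℝ)).2 h1'
        push_cast at this ⊢
        linarith
      have h2 : ((k:ℝ)/2)^p ≤ ((i+(n+1):ℕ):ℝ)^p :=
        pow_le_pow_left₀ (by positivity) h1 p
      have h3 : (((i+(n+1):ℕ):ℝ))^p ≤ (Nat.ascFactorial (i+(n+1)) p : ℝ) := by
        exact_mod_cast Nat.pow_succ_le_ascFactorial (i+(n+1)) p
      have hg := hmle (i+(n+1)) hik
      simp only [hh, hA]
      calc C * s * ((k:ℝ)/2)^p * m
          ≤ C * s * (Nat.ascFactorial (i+(n+1)) p : ℝ) * m := by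
            apply mul_le_mul_of_nonneg_right _ hm0
            apply mul_le_mul_of_nonneg_left (h2.trans h3) (by positivity)
        _ ≤ C * s * (Nat.ascFactorial (i+(n+1)) p : ℝ) * ‖f' (y (i+(n+1)))‖ ^ q := by
            apply mul_le_mul_of_nonneg_left hg
            positivity
    have hsum2 : (↑(k - n) : ℝ) * (C * s * ((k:ℝ)/2)^p * m)
        ≤ ∑ i ∈ Finset.range (k - n), h (i + (n+1)) := by
      have := Finset.card_nsmul_le_sum (Finset.range (k-n))
        (fun i => h (i + (n+1))) (C * s * ((k:ℝ)/2)^p * m) hsum1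
      simpa [nsmul_eq_mul] using this
    have hsum3 : ∑ i ∈ Finset.range (k - n), h (i + (n+1)) ≤ ∑' j : ℕ, h (j + (n+1)) :=
      Summable.sum_le_tsum _ (fun i _ => hhnn _) ((summable_nat_add_iff (n+1)).2 hsummable)
    have hcard : ((k:ℝ)/2) ≤ (↑(k - n):ℝ) := by
      have h1' : k ≤ 2 * (k - n) := by omega
      have := (Nat.cast_le (α := ℝ)).2 h1'
      push_cast at this ⊢
      linarith
    have hfinal : ((k:ℝ)/2) * (C * s * ((k:ℝ)/2)^p * m) ≤ ∑' j : ℕ, h (j + (n+1)) := by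
      refine le_trans ?_ (le_trans hsum2 hsum3)
      apply mul_le_mul_of_nonneg_right hcard
      exact mul_nonneg (by positivity) hm0
    have hid : ((k:ℝ))^(p+1) * m
        = (2:ℝ)^(p+1)/(C*s) * (((k:ℝ)/2) * (C * s * ((k:ℝ)/2)^p * m)) := by
      have h2half : ((1:ℝ)/2)^p * 2^p = 1 := by rw [← mul_pow]; norm_num
      field_simp
      linear_combination (-((k:ℝ) * (k:ℝ) ^ p * m * 2)) * h2half
    rw [hid]
    exact mul_le_mul_of_nonneg_left hfinal (by positivity)
end
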